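/- arXiv:2206.01054 — 4 statements merged into one kernel-verified Lean document; each statement's English description precedes it below -/
import Mathlib

section
/- Let G be a finite group. A permutation π of G is an automorphism of the directed reduced power graph →RP(G) if and only if π can be written as a product τ·σ, where τ is a permutation of G fixing every ≃-class of G setwise and σ is a P(G)-permutation. (Equivalently, Aut(→RP(G)) = N·P, where N is the group of permutations fixing every ≃-class setwise and P is the group of P(G)-permutations.) -/
open Subgroup Set

variable (G : Type*) [Group G]

/-- Arc of the directed reduced power graph `→RP(G)`: from `x` to `y` iff `⟨y⟩ ⊊ ⟨x⟩`. -/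
def rpArc (x y : G) : Prop := zpowers y < zpowers x

/-- Adjacency in the undirected reduced power graph `RP(G)`:
`x` and `y` are adjacent iff `⟨x⟩ ⊊ ⟨y⟩` or `⟨y⟩ ⊊ ⟨x⟩`. -/
def rpAdj (x y : G) : Prop := zpowers x < zpowers y ∨ zpowers y < zpowers x

/-- `x ≃ y` iff `x` and `y` have the same neighbourhood in `RP(G)`. -/
def simEq (x y : G) : Prop := ∀ z : G, rpAdj G x z ↔ rpAdj G y z

/-- The `≃`-class `x̂` of `x`. -/
def hatCls (x : G) : Set G := {y | simEq G y x}

/-- The `∼`-class `[x]` of `x`: the set of generators of `⟨x⟩`. -/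
def genCls (x : G) : Set G := {y | zpowers y = zpowers x}

/-- The automorphism group of the directed reduced power graph `→RP(G)`,
as a subgroup of the permutations of `G`. -/
def DRPAut : Subgroup (Equiv.Perm G) where
  carrier := {π | ∀ x y : G, rpArc G (π x) (π y) ↔ rpArc G x y}
  one_mem' := fun _ _ => Iff.rfl
  mul_mem' := by
    intro a b ha hb x y
    simp only [Equiv.Perm.mul_apply]
    exact (ha (b x) (b y)).trans (hb x y)
  inv_mem' := by
    intro a ha x y
    have h := ha (a⁻¹ x) (a⁻¹ y)
    simp only [Equiv.Perm.coe_inv, Equiv.apply_symm_apply] at h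
    exact h.symm

/-- The automorphism group of the undirected reduced power graph `RP(G)`,
as a subgroup of the permutations of `G`. -/
def RPAut : Subgroup (Equiv.Perm G) where
  carrier := {π | ∀ x y : G, rpAdj G (π x) (π y) ↔ rpAdj G x y}
  one_mem' := fun _ _ => Iff.rfl
  mul_mem' := by
    intro a b ha hb x y
    simp only [Equiv.Perm.mul_apply]
    exact (ha (b x) (b y)).trans (hb x y)
  inv_mem' := by
    intro a ha x y
    have h := ha (a⁻¹ x) (a⁻¹ y)
    simp only [Equiv.Perm.coe_inv, Equiv.apply_symm_apply] at h
    exact h.symm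

/-- `⟨x⟩` is a maximal cyclic subgroup of `G`. -/
def IsMaxCyc (x : G) : Prop := ∀ y : G, zpowers x ≤ zpowers y → zpowers x = zpowers y

/-- The `≃`-class of `x` is of Type I: it is a single `∼`-class, `x̂ = [x]`. -/
def TypeI (x : G) : Prop := hatCls G x = genCls G x

/-- The `≃`-class of `x` is of Type II: it is a union of `r ≥ 2` `∼`-classes whose
cyclic subgroups are distinct maximal cyclic subgroups of `G`, all of the same order. -/
def TypeII (x : G) : Prop :=
  (∃ y z : G, simEq G y x ∧ simEq G z x ∧ zpowers y ≠ zpowers z) ∧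
  ∀ y : G, simEq G y x → IsMaxCyc G y ∧ orderOf y = orderOf x

/-- The `≃`-class of `x` is of Type III: `G` is non-cyclic, the class is a union of
`r ≥ 2` `∼`-classes whose cyclic subgroups are maximal cyclic subgroups of prime order,
and at least two distinct orders occur. -/
def TypeIII (x : G) : Prop :=
  ¬ IsCyclic G ∧
  (∃ y z : G, simEq G y x ∧ simEq G z x ∧ orderOf y ≠ orderOf z) ∧
  ∀ y : G, simEq G y x → IsMaxCyc G y ∧ (orderOf y).Prime

/-- The `≃`-class of `x` is of Type IV with parameter `(p, q)`: it is a union of exactly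
two `∼`-classes of elements of distinct prime orders `p` and `q`, the corresponding cyclic
subgroups being non-maximal when `G` is non-cyclic, and maximal when `G` is cyclic. -/
def TypeIV (x : G) (p q : ℕ) : Prop :=
  p.Prime ∧ q.Prime ∧ p ≠ q ∧
  (∃ x₁ x₂ : G, simEq G x₁ x ∧ simEq G x₂ x ∧ orderOf x₁ = p ∧ orderOf x₂ = q ∧
     ∀ y : G, simEq G y x → zpowers y = zpowers x₁ ∨ zpowers y = zpowers x₂) ∧
  ((¬ IsCyclic G ∧ ∀ y : G, simEq G y x → ¬ IsMaxCyc G y) ∨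
   (IsCyclic G ∧ ∀ y : G, simEq G y x → IsMaxCyc G y))

/-- A `P(G)`-permutation: a permutation `σ` of `G` preserving element orders, mapping each
`∼`-class `[x]` onto `[x^σ]`, and preserving inclusion and non-inclusion of cyclic subgroups. -/
def IsPPerm (σ : Equiv.Perm G) : Prop :=
  (∀ x : G, orderOf (σ x) = orderOf x) ∧
  (∀ x : G, σ '' genCls G x = genCls G (σ x)) ∧
  (∀ x y : G, zpowers y ≤ zpowers x ↔ zpowers (σ y) ≤ zpowers (σ x))

/-- A permutation of `G` fixing every `≃`-class setwise. -/
def FixesClasses (τ : Equiv.Perm G) : Prop := ∀ x : G, simEq G (τ x) x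

section RPPproof
set_option linter.unusedSectionVars false
set_option linter.unusedVariables false
namespace RPP
variable {G : Type*} [Group G]

def dn (x : G) : Set G := {z | zpowers z < zpowers x}
def upS (x : G) : Set G := {z | zpowers x < zpowers z}

lemma simEq_refl (x : G) : simEq G x x := fun _ => Iff.rfl
lemma simEq_symm {x y : G} (h : simEq G x y) : simEq G y x := fun z => (h z).symm
lemma simEq_trans {x y z : G} (h : simEq G x y) (h' : simEq G y z) : simEq G x z :=
  fun t => (h t).trans (h' t)

lemma not_adj_self (x : G) : ¬ rpAdj G x x := by
  rintro (h | h) <;> exact lt_irrefl _ h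

lemma not_adj_of_simEq {x y : G} (h : simEq G x y) : ¬ rpAdj G x y :=
  fun hxy => not_adj_self y ((h y).mp hxy)

lemma not_lt_of_simEq {x y : G} (h : simEq G x y) : ¬ zpowers x < zpowers y :=
  fun hl => not_adj_of_simEq h (Or.inl hl)

lemma dn_eq_of_simEq {x y : G} (h : simEq G x y) : dn x = dn y := by
  have key : ∀ u v : G, simEq G u v → dn u ⊆ dn v := by
    intro u v huv z hz
    rcases (huv z).mp (Or.inr hz) with h1 | h1
    · exact absurd (lt_trans h1 hz) (not_lt_of_simEq (simEq_symm huv))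
    · exact h1
  exact subset_antisymm (key x y h) (key y x (simEq_symm h))

lemma upS_eq_of_simEq {x y : G} (h : simEq G x y) : upS x = upS y := by
  have key : ∀ u v : G, simEq G u v → upS u ⊆ upS v := by
    intro u v huv z hz
    rcases (huv z).mp (Or.inl hz) with h1 | h1
    · exact h1
    · exact absurd (lt_trans hz h1) (not_lt_of_simEq huv)
  exact subset_antisymm (key x y h) (key y x (simEq_symm h))

lemma simEq_of_dn_upS {x y : G} (h1 : dn x = dn y) (h2 : upS x = upS y) : simEq G x y := by
  intro z
  constructor
  · rintro (h | h)
    · exact Or.inl (h2 ▸ h : z ∈ upS y)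
    · exact Or.inr (h1 ▸ h : z ∈ dn y)
  · rintro (h | h)
    · exact Or.inl (h2 ▸ h : z ∈ upS x)
    · exact Or.inr (h1 ▸ h : z ∈ dn x)

lemma simEq_of_genCls {x y : G} (h : zpowers x = zpowers y) : simEq G x y := by
  intro z; unfold rpAdj; rw [h]

variable [Fintype G]

lemma card_zp (x : G) : ((zpowers x : Subgroup G) : Set G).ncard = orderOf x := by
  rw [← Nat.card_coe_set_eq]
  exact Nat.card_zpowers x

lemma coe_ssubset_of_lt {H K : Subgroup G} (h : H < K) : (H : Set G) ⊂ K :=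
  SetLike.lt_iff_le_and_exists.mp h |> fun ⟨a, b, c, d⟩ => ⟨a, fun hs => d (hs c)⟩

lemma orderOf_lt_of_lt {x y : G} (h : zpowers x < zpowers y) : orderOf x < orderOf y := by
  rw [← card_zp, ← card_zp]
  exact Set.ncard_lt_ncard (coe_ssubset_of_lt h) (Set.toFinite _)

lemma orderOf_dvd_of_le {x y : G} (h : zpowers x ≤ zpowers y) : orderOf x ∣ orderOf y := by
  rw [← Nat.card_zpowers x, ← Nat.card_zpowers y]
  exact Subgroup.card_dvd_of_le h

lemma coe_zpowers_eq (x : G) : ((zpowers x : Subgroup G) : Set G) = dn x ∪ genCls G x := by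
  ext z
  simp only [SetLike.mem_coe, Set.mem_union]
  constructor
  · intro hz
    rcases lt_or_eq_of_le (zpowers_le.mpr hz) with h | h
    · exact Or.inl h
    · exact Or.inr h
  · rintro (h | h)
    · exact zpowers_le.mp h.le
    · exact zpowers_le.mp h.le

lemma disj_dn_gen (x : G) : Disjoint (dn x) (genCls G x) := by
  rw [Set.disjoint_left]
  intro z hz hg
  have hg' : zpowers z = zpowers x := hg
  have hz' : zpowers z < zpowers x := hz
  rw [hg'] at hz'
  exact lt_irrefl _ hz'

lemma orderOf_eq_ncard (x : G) : orderOf x = (dn x).ncard + (genCls G x).ncard := by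
  rw [← card_zp, coe_zpowers_eq]
  exact Set.ncard_union_eq (disj_dn_gen x) (Set.toFinite _) (Set.toFinite _)

lemma mem_gen_self (x : G) : x ∈ genCls G x := rfl

lemma orderOf_eq_of_gen {x y : G} (h : y ∈ genCls G x) : orderOf y = orderOf x := by
  rw [← Nat.card_zpowers, ← Nat.card_zpowers, h]

lemma genCls_eq_of_mem {x y : G} (h : y ∈ genCls G x) : genCls G y = genCls G x := by
  unfold genCls at *; rw [Set.ext_iff]; intro z; simp only [Set.mem_setOf_eq] at *; rw [h]

lemma dn_subset_zp (x : G) : dn x ⊆ (zpowers x : Subgroup G) := by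
  rw [coe_zpowers_eq]; exact Set.subset_union_left


end RPP
namespace RPP
variable {G : Type*} [Group G] [Fintype G]

section Aut
-- hπ : the defining property of a DRP automorphism, extracted
variable {π : Equiv.Perm G}

def AutP (π : Equiv.Perm G) : Prop := ∀ x y : G, zpowers (π y) < zpowers (π x) ↔ zpowers y < zpowers x

lemma aut_image_dn (hπ : AutP π) (x : G) : π '' dn x = dn (π x) := by
  ext z
  constructor
  · rintro ⟨w, hw, rfl⟩
    exact (hπ x w).mpr hw
  · intro hz
    refine ⟨π.symm z, ?_, π.apply_symm_apply z⟩
    have : zpowers (π (π.symm z)) < zpowers (π x) := by rwa [π.apply_symm_apply]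
    exact (hπ x (π.symm z)).mp this

lemma aut_image_upS (hπ : AutP π) (x : G) : π '' upS x = upS (π x) := by
  ext z
  constructor
  · rintro ⟨w, hw, rfl⟩
    exact (hπ w x).mpr hw
  · intro hz
    refine ⟨π.symm z, ?_, π.apply_symm_apply z⟩
    have : zpowers (π x) < zpowers (π (π.symm z)) := by rwa [π.apply_symm_apply]
    exact (hπ (π.symm z) x).mp this

lemma aut_simEq (hπ : AutP π) {x y : G} (h : simEq G x y) : simEq G (π x) (π y) := by
  intro z
  unfold rpAdj
  constructor
  · rintro (h1 | h1)
    · have : z ∈ upS (π x) := h1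
      rw [← aut_image_upS hπ, upS_eq_of_simEq h, aut_image_upS hπ] at this
      exact Or.inl this
    · have : z ∈ dn (π x) := h1
      rw [← aut_image_dn hπ, dn_eq_of_simEq h, aut_image_dn hπ] at this
      exact Or.inr this
  · rintro (h1 | h1)
    · have : z ∈ upS (π y) := h1
      rw [← aut_image_upS hπ, ← upS_eq_of_simEq h, aut_image_upS hπ] at this
      exact Or.inl this
    · have : z ∈ dn (π y) := h1
      rw [← aut_image_dn hπ, ← dn_eq_of_simEq h, aut_image_dn hπ] at this
      exact Or.inr this

lemma aut_image_hat (hπ : AutP π) (x : G) : π '' {y | simEq G y x} = {y | simEq G y (π x)} := by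
  ext z
  constructor
  · rintro ⟨w, hw, rfl⟩
    exact aut_simEq hπ hw
  · intro hz
    refine ⟨π.symm z, ?_, π.apply_symm_apply z⟩
    have h2 : ∀ u v : G, simEq G (π u) (π v) → simEq G u v := by
      intro u v h t
      have := h (π t)
      unfold rpAdj at this ⊢
      rw [hπ u t, hπ t u, hπ v t, hπ t v] at this
      exact this
    apply h2
    rwa [π.apply_symm_apply]

lemma aut_ncard_dn (hπ : AutP π) (x : G) : (dn (π x)).ncard = (dn x).ncard := by
  rw [← aut_image_dn hπ]
  exact Set.ncard_image_of_injective _ π.injective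

lemma aut_ncard_hat (hπ : AutP π) (x : G) : {y | simEq G y (π x)}.ncard = {y | simEq G y x}.ncard := by
  rw [← aut_image_hat hπ]
  exact Set.ncard_image_of_injective _ π.injective

lemma aut_inv (hπ : AutP π) (x y : G) : zpowers (π.symm y) < zpowers (π.symm x) ↔ zpowers y < zpowers x := by
  rw [← hπ]
  rw [π.apply_symm_apply, π.apply_symm_apply]

end Aut

section PowerLemma

-- B7
lemma zpowers_eq_pow_div {w y : G} (h : y ∈ zpowers w) :
    zpowers y = zpowers (w ^ (orderOf w / orderOf y)) := by
  obtain ⟨a, rfl⟩ := mem_powers_iff_mem_zpowers.mpr h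
  set n := orderOf w with hn
  set g := Nat.gcd n a with hg
  have hne : w ^ a ∈ zpowers (w ^ g) := by
    obtain ⟨c, hc⟩ : g ∣ a := Nat.gcd_dvd_right n a
    refine ⟨(c : ℤ), ?_⟩
    show (w ^ g) ^ (c : ℤ) = w ^ a
    rw [zpow_natCast, ← pow_mul, ← hc]
  have hgn : g ∣ n := Nat.gcd_dvd_left n a
  have hnpos : 0 < n := orderOf_pos w
  have hgpos : 0 < g := Nat.pos_of_ne_zero (by
    intro h0
    have := Nat.eq_zero_of_gcd_eq_zero_left (hg ▸ h0)
    omega)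
  have hog : orderOf (w ^ g) = n / g := by
    rw [orderOf_pow w, ← hn, Nat.gcd_eq_right hgn]
  have hoa : orderOf (w ^ a) = n / g := by rw [orderOf_pow w, ← hn]
  have hle : zpowers (w ^ a) ≤ zpowers (w ^ g) := zpowers_le.mpr hne
  have heq : zpowers (w ^ a) = zpowers (w ^ g) := by
    have hcard : ((zpowers (w ^ g) : Subgroup G) : Set G).ncard ≤ ((zpowers (w ^ a) : Subgroup G) : Set G).ncard := by
      rw [card_zp, card_zp, hog, hoa]
    have := Set.eq_of_subset_of_ncard_le (Set.le_iff_subset.mp hle) hcard (Set.toFinite _)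
    exact SetLike.coe_injective this
  rw [heq, hoa]
  congr 1
  rw [Nat.div_div_self hgn hnpos.ne']

lemma zpowers_eq_of_orderOf_eq {w y z : G} (hy : y ∈ zpowers w) (hz : z ∈ zpowers w)
    (h : orderOf y = orderOf z) : zpowers y = zpowers z := by
  rw [zpowers_eq_pow_div hy, zpowers_eq_pow_div hz, h]

end PowerLemma

-- B8
lemma dn_empty_iff {x : G} : dn x = ∅ ↔ x = 1 := by
  constructor
  · intro h
    by_contra hx
    have h1 : (1 : G) ∈ dn x := by
      show zpowers (1 : G) < zpowers x
      rw [Subgroup.zpowers_one_eq_bot]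
      exact bot_lt_iff_ne_bot.mpr (fun hb => hx (Subgroup.zpowers_eq_bot.mp hb))
    rw [h] at h1
    exact h1
  · rintro rfl
    ext z
    simp only [Set.mem_empty_iff_false, iff_false]
    intro hz
    have hz' : zpowers z < zpowers (1 : G) := hz
    rw [Subgroup.zpowers_one_eq_bot] at hz'
    exact absurd hz' (by simp)

-- B9 forward: prime order => dn = {1}
lemma dn_eq_one_of_prime {x : G} (hp : (orderOf x).Prime) : dn x = {1} := by
  ext z
  simp only [Set.mem_singleton_iff]
  constructor
  · intro hz
    have hdvd : orderOf z ∣ orderOf x := orderOf_dvd_of_le hz.le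
    have hlt : orderOf z < orderOf x := orderOf_lt_of_lt hz
    rcases (Nat.Prime.eq_one_or_self_of_dvd hp _ hdvd) with h | h
    · exact orderOf_eq_one_iff.mp h
    · omega
  · rintro rfl
    show zpowers (1 : G) < zpowers x
    rw [Subgroup.zpowers_one_eq_bot]
    refine bot_lt_iff_ne_bot.mpr (fun hb => ?_)
    have := Subgroup.zpowers_eq_bot.mp hb
    rw [this, orderOf_one] at hp
    exact hp.one_lt.ne' rfl

-- B9 converse
lemma prime_of_dn_eq_one {x : G} (h : dn x = {1}) : (orderOf x).Prime := by
  have hx : x ≠ 1 := by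
    intro h1
    rw [dn_empty_iff.mpr h1] at h
    exact absurd h.symm (by simp)
  have hn : 2 ≤ orderOf x := by
    have h1 : orderOf x ≠ 1 := fun h1 => hx (orderOf_eq_one_iff.mp h1)
    have h2 := orderOf_pos x
    omega
  set n := orderOf x with hdefn
  by_contra hnp
  set q := n.minFac with hq
  have hqp : q.Prime := Nat.minFac_prime (by omega)
  have hqd : q ∣ n := Nat.minFac_dvd n
  have hqn : q ≠ n := fun h' => hnp (h' ▸ hqp)
  set z := x ^ (n / q) with hz
  have hoz : orderOf z = q := by
    rw [hz, orderOf_pow x, ← hdefn, Nat.gcd_eq_right (Nat.div_dvd_of_dvd hqd),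
      Nat.div_div_self hqd (by omega)]
  have hzx : z ∈ zpowers x := hz ▸ Subgroup.npow_mem_zpowers x (n / q)
  have hlt : zpowers z < zpowers x := by
    refine lt_of_le_of_ne (zpowers_le.mpr hzx) (fun he => ?_)
    have : orderOf z = orderOf x := by rw [← Nat.card_zpowers, ← Nat.card_zpowers, he]
    rw [hoz, ← hdefn] at this
    exact hqn this
  have : z ∈ dn x := hlt
  rw [h] at this
  rw [Set.mem_singleton_iff] at this
  rw [this, orderOf_one] at hoz
  exact hqp.one_lt.ne' hoz.symm

lemma ncard_dn_eq_one_iff {x : G} : (dn x).ncard = 1 ↔ (orderOf x).Prime := by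
  constructor
  · intro h
    obtain ⟨a, ha⟩ := Set.ncard_eq_one.mp h
    have hx : x ≠ 1 := by
      intro h1
      rw [dn_empty_iff.mpr h1] at ha
      exact absurd ha.symm (by simp)
    have h1 : (1 : G) ∈ dn x := by
      show zpowers (1 : G) < zpowers x
      rw [Subgroup.zpowers_one_eq_bot]
      exact bot_lt_iff_ne_bot.mpr (fun hb => hx (Subgroup.zpowers_eq_bot.mp hb))
    rw [ha] at h1
    rw [Set.mem_singleton_iff] at h1
    exact prime_of_dn_eq_one (h1 ▸ ha)
  · intro h
    rw [dn_eq_one_of_prime h]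
    exact Set.ncard_singleton 1

end RPP
namespace RPP
variable {G : Type*} [Group G] [Fintype G]

lemma nat_aux {n d ℓ : ℕ} (hℓ : ℓ.Prime) (hℓd : ℓ ∣ n) (h1 : n / ℓ ∣ d) (h2 : d ∣ n)
    (h3 : d < n) (hn : 0 < n) : d = n / ℓ := by
  obtain ⟨t, ht⟩ := h1
  have hm : 0 < n / ℓ := Nat.div_pos (Nat.le_of_dvd hn hℓd) hℓ.pos
  have hmuln : n / ℓ * ℓ = n := Nat.div_mul_cancel hℓd
  have htℓ : t ∣ ℓ := by
    have h4 : n / ℓ * t ∣ n / ℓ * ℓ := by rw [hmuln, ← ht]; exact h2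
    exact (Nat.mul_dvd_mul_iff_left hm).mp h4
  rcases hℓ.eq_one_or_self_of_dvd t htℓ with h | h
  · rw [h, mul_one] at ht; exact ht
  · rw [h, hmuln] at ht; omega

-- B10: in a multi-class hat with composite orders, order is determined by d
lemma composite_multi {x y : G} (hsim : simEq G y x) (hne : zpowers y ≠ zpowers x)
    (hd : 2 ≤ (dn x).ncard) :
    orderOf x = ((dn x).ncard).minFac * (dn x).ncard := by
  have hD : ((zpowers x ⊓ zpowers y : Subgroup G) : Set G) = dn x := by
    ext u
    simp only [Subgroup.coe_inf, Set.mem_inter_iff, SetLike.mem_coe]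
    constructor
    · rintro ⟨h1, h2⟩
      have h1' : zpowers u ≤ zpowers x := zpowers_le.mpr h1
      rcases lt_or_eq_of_le h1' with h | h
      · exact h
      · exfalso
        have h2' : zpowers u ≤ zpowers y := zpowers_le.mpr h2
        rw [h] at h2'
        rcases lt_or_eq_of_le h2' with h3 | h3
        · exact not_lt_of_simEq (simEq_symm hsim) h3
        · exact hne h3.symm
    · intro hu
      have hu2 : u ∈ dn y := by rw [dn_eq_of_simEq hsim]; exact hu
      exact ⟨zpowers_le.mp (le_of_lt hu), zpowers_le.mp (le_of_lt hu2)⟩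
  have hcardD : Nat.card (zpowers x ⊓ zpowers y : Subgroup G) = (dn x).ncard := by
    rw [← hD]
    exact Nat.card_coe_set_eq _
  have hdn : (dn x).ncard ∣ orderOf x := by
    rw [← hcardD, ← Nat.card_zpowers x]
    exact Subgroup.card_dvd_of_le inf_le_left
  have hdltn : (dn x).ncard < orderOf x := by
    rw [← card_zp x]
    refine Set.ncard_lt_ncard ⟨dn_subset_zp x, fun hsub => ?_⟩ (Set.toFinite _)
    have hxx : x ∈ dn x := hsub (by exact Subgroup.mem_zpowers x)
    exact lt_irrefl _ (show zpowers x < zpowers x from hxx)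
  have claim : ∀ ℓ : ℕ, ℓ.Prime → ℓ ∣ orderOf x → (dn x).ncard = orderOf x / ℓ := by
    intro ℓ hℓp hℓd
    have hHle : zpowers (x ^ ℓ) ≤ zpowers x ⊓ zpowers y := by
      intro u hu
      have hux : u ∈ zpowers x :=
        (zpowers_le.mpr (Subgroup.npow_mem_zpowers x ℓ)) hu
      have hord : orderOf u ∣ orderOf x / ℓ := by
        calc orderOf u ∣ orderOf (x ^ ℓ) := orderOf_dvd_of_le (zpowers_le.mpr hu)
        _ = orderOf x / ℓ := by rw [orderOf_pow x, Nat.gcd_eq_right hℓd]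
      have hlt : zpowers u < zpowers x := by
        refine lt_of_le_of_ne (zpowers_le.mpr hux) (fun he => ?_)
        have ho : orderOf u = orderOf x := by
          rw [← Nat.card_zpowers, ← Nat.card_zpowers, he]
        have hnl : orderOf x / ℓ < orderOf x := Nat.div_lt_self (orderOf_pos x) hℓp.one_lt
        have hpos : 0 < orderOf x / ℓ :=
          Nat.div_pos (Nat.le_of_dvd (orderOf_pos x) hℓd) hℓp.pos
        have := Nat.le_of_dvd hpos hord
        omega
      have hmem : u ∈ dn x := hlt
      rw [← hD] at hmem
      exact hmem
    have h1 : orderOf x / ℓ ∣ (dn x).ncard := by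
      rw [← hcardD]
      have hco : Nat.card (zpowers (x ^ ℓ) : Subgroup G) = orderOf x / ℓ := by
        rw [Nat.card_zpowers, orderOf_pow x, Nat.gcd_eq_right hℓd]
      rw [← hco]
      exact Subgroup.card_dvd_of_le hHle
    exact nat_aux hℓp hℓd h1 hdn hdltn (orderOf_pos x)
  have hminp : (orderOf x).minFac.Prime := Nat.minFac_prime (by omega)
  have hdm : ((dn x).ncard).minFac.Prime := Nat.minFac_prime (by omega)
  have hdmn : ((dn x).ncard).minFac ∣ orderOf x := dvd_trans (Nat.minFac_dvd _) hdn
  have h2 : (dn x).ncard = orderOf x / ((dn x).ncard).minFac := claim _ hdm hdmn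
  calc orderOf x = ((dn x).ncard).minFac * (orderOf x / ((dn x).ncard).minFac) :=
        (Nat.mul_div_cancel' hdmn).symm
    _ = ((dn x).ncard).minFac * (dn x).ncard := by rw [← h2]

-- PART: divisibility of a gen-saturated set's cardinality by the common class size
lemma part_dvd (s : ℕ) : ∀ (n : ℕ) (A : Set G), A.ncard = n →
    (∀ y ∈ A, genCls G y ⊆ A) → (∀ y ∈ A, (genCls G y).ncard = s) → s ∣ n := by
  intro n
  induction n using Nat.strong_induction_on with
  | _ n IH =>
    intro A hcard hsat hsize
    rcases Set.eq_empty_or_nonempty A with rfl | ⟨a, ha⟩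
    · simp only [Set.ncard_empty] at hcard
      exact hcard ▸ dvd_zero s
    have hgen : genCls G a ⊆ A := hsat a ha
    have hs : (genCls G a).ncard = s := hsize a ha
    have hspos : 0 < s := by
      rw [← hs]
      exact (Set.ncard_pos (Set.toFinite _)).mpr ⟨a, mem_gen_self a⟩
    have hsub : s ≤ n := by
      rw [← hcard, ← hs]
      exact Set.ncard_le_ncard hgen (Set.toFinite _)
    have hnpos : 0 < n := by
      rw [← hcard]
      exact (Set.ncard_pos (Set.toFinite _)).mpr ⟨a, ha⟩
    have hcard' : (A \ genCls G a).ncard = n - s := by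
      rw [Set.ncard_diff hgen (Set.toFinite _), hcard, hs]
    have hsat' : ∀ y ∈ A \ genCls G a, genCls G y ⊆ A \ genCls G a := by
      rintro y ⟨hyA, hyg⟩ z hz
      refine ⟨hsat y hyA hz, fun hzg => ?_⟩
      refine hyg ?_
      have h1 : genCls G z = genCls G y := genCls_eq_of_mem hz
      have h2 : genCls G z = genCls G a := genCls_eq_of_mem hzg
      rw [← h2, h1]
      exact mem_gen_self y
    have hsize' : ∀ y ∈ A \ genCls G a, (genCls G y).ncard = s := fun y hy => hsize y hy.1
    obtain ⟨c, hc⟩ := IH (n - s) (by omega) _ hcard' hsat' hsize'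
    exact ⟨c + 1, by rw [Nat.mul_add, mul_one, ← hc]; omega⟩

end RPP
namespace RPP
variable {G : Type*} [Group G] [Fintype G]

open Classical in
lemma exists_bijOn_of_ncard_eq {A B : Set G} (h : A.ncard = B.ncard) :
    ∃ g : G → G, Set.BijOn g A B := by
  classical
  have hcards : A.toFinset.card = B.toFinset.card := by
    rw [← Set.ncard_eq_toFinset_card', ← Set.ncard_eq_toFinset_card', h]
  let e := Finset.equivOfCardEq hcards
  refine ⟨fun z => if hz : z ∈ A.toFinset then (e ⟨z, hz⟩ : G) else z, ?_, ?_, ?_⟩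
  · intro z hz
    have hz' : z ∈ A.toFinset := Set.mem_toFinset.mpr hz
    simp only [hz', dif_pos]
    exact Set.mem_toFinset.mp (e ⟨z, hz'⟩).2
  · intro z hz w hw he
    have hz' : z ∈ A.toFinset := Set.mem_toFinset.mpr hz
    have hw' : w ∈ A.toFinset := Set.mem_toFinset.mpr hw
    simp only [hz', hw', dif_pos] at he
    have := e.injective (Subtype.ext he)
    exact Subtype.ext_iff.mp this
  · intro u hu
    have hu' : u ∈ B.toFinset := Set.mem_toFinset.mpr hu
    obtain ⟨⟨z, hz⟩, hez⟩ := e.surjective ⟨u, hu'⟩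
    refine ⟨z, Set.mem_toFinset.mp hz, ?_⟩
    simp only [hz, dif_pos]
    rw [hez]

-- EX: existence of a gen-class-respecting bijection between saturated sets
lemma exists_gen_bij : ∀ (n : ℕ) (A B : Set G), A.ncard = n → B.ncard = n →
    (∀ y ∈ A, genCls G y ⊆ A) → (∀ y ∈ B, genCls G y ⊆ B) →
    (∀ y ∈ A, ∀ z ∈ B, (genCls G y).ncard = (genCls G z).ncard) →
    ∃ g : G → G, Set.BijOn g A B ∧ ∀ y ∈ A, g '' genCls G y = genCls G (g y) := by
  intro n
  induction n using Nat.strong_induction_on with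
  | _ n IH =>
    intro A B hA hB hsatA hsatB hsizes
    rcases Set.eq_empty_or_nonempty A with rfl | ⟨a, ha⟩
    · have hB' : B = ∅ := by
        rw [Set.ncard_empty] at hA
        exact Set.ncard_eq_zero (Set.toFinite _) |>.mp (by omega)
      subst hB'
      exact ⟨id, ⟨fun z hz => hz.elim, fun z hz => hz.elim, fun z hz => hz.elim⟩,
        fun y hy => hy.elim⟩
    have hBne : B.Nonempty := by
      refine (Set.ncard_pos (Set.toFinite _)).mp ?_
      have : 0 < n := by
        rw [← hA]; exact (Set.ncard_pos (Set.toFinite _)).mpr ⟨a, ha⟩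
      omega
    obtain ⟨b, hb⟩ := hBne
    have hgena : genCls G a ⊆ A := hsatA a ha
    have hgenb : genCls G b ⊆ B := hsatB b hb
    have hs : (genCls G a).ncard = (genCls G b).ncard := hsizes a ha b hb
    obtain ⟨e, he⟩ := exists_bijOn_of_ncard_eq hs
    have hspos : 0 < (genCls G a).ncard :=
      (Set.ncard_pos (Set.toFinite _)).mpr ⟨a, mem_gen_self a⟩
    have hsn : (genCls G a).ncard ≤ n := by
      rw [← hA]; exact Set.ncard_le_ncard hgena (Set.toFinite _)
    have hA' : (A \ genCls G a).ncard = n - (genCls G a).ncard := by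
      rw [Set.ncard_diff hgena (Set.toFinite _), hA]
    have hB' : (B \ genCls G b).ncard = n - (genCls G a).ncard := by
      rw [Set.ncard_diff hgenb (Set.toFinite _), hB, hs]
    have hsatA' : ∀ y ∈ A \ genCls G a, genCls G y ⊆ A \ genCls G a := by
      rintro y ⟨hyA, hyg⟩ z hz
      refine ⟨hsatA y hyA hz, fun hzg => ?_⟩
      refine hyg ?_
      rw [← genCls_eq_of_mem hzg, genCls_eq_of_mem hz]
      exact mem_gen_self y
    have hsatB' : ∀ y ∈ B \ genCls G b, genCls G y ⊆ B \ genCls G b := by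
      rintro y ⟨hyB, hyg⟩ z hz
      refine ⟨hsatB y hyB hz, fun hzg => ?_⟩
      refine hyg ?_
      rw [← genCls_eq_of_mem hzg, genCls_eq_of_mem hz]
      exact mem_gen_self y
    have hsizes' : ∀ y ∈ A \ genCls G a, ∀ z ∈ B \ genCls G b,
        (genCls G y).ncard = (genCls G z).ncard := fun y hy z hz => hsizes y hy.1 z hz.1
    obtain ⟨g', hg'bij, hg'gen⟩ :=
      IH (n - (genCls G a).ncard) (by omega) _ _ hA' hB' hsatA' hsatB' hsizes'
    classical
    have hgpos : ∀ z, z ∈ genCls G a → (fun z => if z ∈ genCls G a then e z else g' z) z = e z := by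
      intro z hz
      show (if z ∈ genCls G a then e z else g' z) = e z
      exact if_pos hz
    have hgneg : ∀ z, z ∉ genCls G a → (fun z => if z ∈ genCls G a then e z else g' z) z = g' z := by
      intro z hz
      show (if z ∈ genCls G a then e z else g' z) = g' z
      exact if_neg hz
    refine ⟨fun z => if z ∈ genCls G a then e z else g' z, ?_, ?_⟩
    · refine ⟨?_, ?_, ?_⟩
      · intro z hz
        by_cases hzg : z ∈ genCls G a
        · rw [hgpos z hzg]
          exact hgenb (he.1 hzg)
        · rw [hgneg z hzg]
          exact (hg'bij.1 ⟨hz, hzg⟩).1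
      · intro z hz w hw heq
        by_cases hzg : z ∈ genCls G a <;> by_cases hwg : w ∈ genCls G a
        · rw [hgpos z hzg, hgpos w hwg] at heq
          exact he.2.1 hzg hwg heq
        · rw [hgpos z hzg, hgneg w hwg] at heq
          exfalso
          have h1 : e z ∈ genCls G b := he.1 hzg
          have h2 : g' w ∈ B \ genCls G b := hg'bij.1 ⟨hw, hwg⟩
          exact h2.2 (heq ▸ h1)
        · rw [hgneg z hzg, hgpos w hwg] at heq
          exfalso
          have h1 : e w ∈ genCls G b := he.1 hwg
          have h2 : g' z ∈ B \ genCls G b := hg'bij.1 ⟨hz, hzg⟩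
          exact h2.2 (heq ▸ h1)
        · rw [hgneg z hzg, hgneg w hwg] at heq
          exact hg'bij.2.1 ⟨hz, hzg⟩ ⟨hw, hwg⟩ heq
      · intro u hu
        by_cases hug : u ∈ genCls G b
        · obtain ⟨z, hz, hez⟩ := he.2.2 hug
          refine ⟨z, hgena hz, ?_⟩
          rw [hgpos z hz]
          exact hez
        · obtain ⟨z, hz, hgz⟩ := hg'bij.2.2 ⟨hu, hug⟩
          refine ⟨z, hz.1, ?_⟩
          rw [hgneg z hz.2]
          exact hgz
    · intro y hy
      by_cases hyg : y ∈ genCls G a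
      · have hgy : genCls G y = genCls G a := genCls_eq_of_mem hyg
        have himg : (fun z => if z ∈ genCls G a then e z else g' z) '' genCls G y
            = e '' genCls G a := by
          rw [hgy]
          apply Set.image_congr
          intro z hz
          exact hgpos z hz
        rw [himg, he.image_eq]
        rw [hgpos y hyg]
        exact (genCls_eq_of_mem (he.1 hyg)).symm
      · have hyA' : y ∈ A \ genCls G a := ⟨hy, hyg⟩
        have hysub : genCls G y ⊆ A \ genCls G a := hsatA' y hyA'
        have himg : (fun z => if z ∈ genCls G a then e z else g' z) '' genCls G y
            = g' '' genCls G y := by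
          apply Set.image_congr
          intro z hz
          exact hgneg z (hysub hz).2
        rw [himg, hg'gen y hyA']
        rw [hgneg y hyg]

end RPP
namespace RPP
variable {G : Type*} [Group G] [Fintype G]

lemma dvd_prime_mul {p q m : ℕ} (hp : p.Prime) (hq : q.Prime) (hm : m ∣ p * q) :
    m = 1 ∨ m = p ∨ m = q ∨ m = p * q := by
  by_cases hpm : p ∣ m
  · obtain ⟨k, rfl⟩ := hpm
    have hk : k ∣ q := by
      have h2 : p * k ∣ p * q := hm
      exact (mul_dvd_mul_iff_left hp.pos.ne').mp h2
    rcases (hq.eq_one_or_self_of_dvd k hk) with h | h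
    · right; left; rw [h, mul_one]
    · right; right; right; rw [h]
  · have hco : Nat.Coprime m p := ((hp.coprime_iff_not_dvd).mpr hpm).symm
    have hmq : m ∣ q := Nat.Coprime.dvd_of_dvd_mul_left hco hm
    rcases hq.eq_one_or_self_of_dvd m hmq with h | h
    · exact Or.inl h
    · right; right; left; exact h

lemma zlt_of_le_of_order_ne {a b : G} (h : zpowers a ≤ zpowers b)
    (ho : orderOf a ≠ orderOf b) : zpowers a < zpowers b := by
  refine lt_of_le_of_ne h (fun he => ho ?_)
  rw [← Nat.card_zpowers, ← Nat.card_zpowers, he]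

lemma orderOf_pow_div {w : G} {v : ℕ} (hv : v ∣ orderOf w) :
    orderOf (w ^ v) = orderOf w / v := by
  rw [orderOf_pow w, Nat.gcd_eq_right hv]

lemma orderOf_eq_of_zpowers_eq {a b : G} (h : zpowers a = zpowers b) :
    orderOf a = orderOf b := by
  rw [← Nat.card_zpowers, ← Nat.card_zpowers, h]

lemma exists_minimal_up {x : G} (h : (upS x).Nonempty) :
    ∃ w ∈ upS x, ∀ v ∈ upS x, ¬ zpowers v < zpowers w := by
  obtain ⟨w, hw, hmin⟩ := Set.exists_min_image (upS x) orderOf (Set.toFinite _) h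
  exact ⟨w, hw, fun v hv hlt => absurd (hmin v hv) (by
    have := orderOf_lt_of_lt hlt
    omega)⟩

-- minimal elements above prime-order elements have order p * r with r prime
lemma min_up_order {x w : G} (hp : (orderOf x).Prime) (hw : w ∈ upS x)
    (hmin : ∀ v ∈ upS x, ¬ zpowers v < zpowers w) :
    ∃ r : ℕ, r.Prime ∧ orderOf w = orderOf x * r := by
  have hxw : x ∈ zpowers w := zpowers_le.mp (le_of_lt hw)
  have hdvd : orderOf x ∣ orderOf w := orderOf_dvd_of_le (le_of_lt hw)
  have hlt : orderOf x < orderOf w := orderOf_lt_of_lt hw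
  obtain ⟨t, ht⟩ := hdvd
  have hwpos : 0 < orderOf w := orderOf_pos w
  have ht2 : 2 ≤ t := by
    rcases Nat.lt_or_ge t 2 with h | h
    · interval_cases t <;> omega
    · exact h
  refine ⟨t, ?_, ht⟩
  by_contra htnp
  set u := t.minFac with hu
  have hup : u.Prime := Nat.minFac_prime (by omega)
  have hud : u ∣ t := Nat.minFac_dvd t
  obtain ⟨v, hv⟩ := hud
  have hv2 : 2 ≤ v := by
    rcases Nat.lt_or_ge v 2 with h | h
    · interval_cases v
      · omega
      · rw [mul_one] at hv; exact absurd (hv ▸ hup) htnp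
    · exact h
  have hvw : v ∣ orderOf w := ⟨orderOf x * u, by rw [ht, hv]; ring⟩
  have how' : orderOf (w ^ v) = orderOf x * u := by
    rw [orderOf_pow_div hvw, ht, hv]
    have h3 : orderOf x * (u * v) = (orderOf x * u) * v := by ring
    rw [h3, Nat.mul_div_cancel _ (show 0 < v by omega)]
  have hxv : zpowers x ≤ zpowers (w ^ v) := by
    have h1 : zpowers x = zpowers (w ^ (orderOf w / orderOf x)) := zpowers_eq_pow_div hxw
    have h2 : orderOf w / orderOf x = t := by rw [ht, Nat.mul_div_cancel_left _ (orderOf_pos x)]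
    rw [h1, h2]
    have : w ^ t = (w ^ v) ^ u := by rw [← pow_mul, hv, mul_comm]
    rw [this]
    exact zpowers_le.mpr (Subgroup.npow_mem_zpowers _ _)
  have hxvlt : zpowers x < zpowers (w ^ v) :=
    zlt_of_le_of_order_ne hxv (by rw [how']; nlinarith [hp.two_le, hup.two_le])
  have hwv_up : w ^ v ∈ upS x := hxvlt
  have hwvlt : zpowers (w ^ v) < zpowers w := by
    refine zlt_of_le_of_order_ne (zpowers_le.mpr (Subgroup.npow_mem_zpowers w v)) ?_
    rw [how', ht, hv]
    have hxpos := hp.two_le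
    have hupos := hup.two_le
    nlinarith
  exact hmin _ hwv_up hwvlt

end RPP
namespace RPP
variable {G : Type*} [Group G] [Fintype G]

-- structure of a multi-class hat of prime-order elements with nonempty up-set
lemma primeMultiStruct {x z₀ w : G} (hp : (orderOf x).Prime) (hsim : simEq G z₀ x)
    (hne : zpowers z₀ ≠ zpowers x) (hw : w ∈ upS x)
    (hmin : ∀ v ∈ upS x, ¬ zpowers v < zpowers w) :
    (orderOf z₀).Prime ∧ orderOf z₀ ≠ orderOf x ∧ orderOf w = orderOf x * orderOf z₀ ∧
    (∀ c, simEq G c x → zpowers c = zpowers x ∨ zpowers c = zpowers z₀) := by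
  have hdnz : dn z₀ = dn x := dn_eq_of_simEq hsim
  have hq : (orderOf z₀).Prime := by
    apply prime_of_dn_eq_one
    rw [hdnz]
    exact dn_eq_one_of_prime hp
  have hupz : upS z₀ = upS x := upS_eq_of_simEq hsim
  have hzw : z₀ ∈ zpowers w := zpowers_le.mp (le_of_lt (show zpowers z₀ < zpowers w by
    rw [show (zpowers z₀ < zpowers w) = (w ∈ upS z₀) from rfl, hupz]; exact hw))
  have hxw : x ∈ zpowers w := zpowers_le.mp (le_of_lt hw)
  have hqp : orderOf z₀ ≠ orderOf x := by
    intro he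
    exact hne (zpowers_eq_of_orderOf_eq hzw hxw he)
  obtain ⟨r, hr, hwr⟩ := min_up_order hp hw hmin
  have hqd : orderOf z₀ ∣ orderOf w := by
    apply orderOf_dvd_of_le
    apply le_of_lt
    rw [show (zpowers z₀ < zpowers w) = (w ∈ upS z₀) from rfl, hupz]
    exact hw
  have hqr : orderOf z₀ = r := by
    rw [hwr] at hqd
    rcases (Nat.Prime.dvd_mul hq).mp hqd with h | h
    · exact absurd ((Nat.prime_dvd_prime_iff_eq hq hp).mp h) hqp
    · exact (Nat.prime_dvd_prime_iff_eq hq hr).mp h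
  rw [← hqr] at hwr hr
  refine ⟨hq, hqp, hwr, ?_⟩
  intro c hc
  have hdnc : dn c = dn x := dn_eq_of_simEq hc
  have hcp : (orderOf c).Prime := by
    apply prime_of_dn_eq_one
    rw [hdnc]
    exact dn_eq_one_of_prime hp
  have hcw : c ∈ zpowers w := by
    have : w ∈ upS c := by rw [upS_eq_of_simEq hc]; exact hw
    exact zpowers_le.mp (le_of_lt this)
  have hcd : orderOf c ∣ orderOf x * orderOf z₀ := by
    rw [← hwr]
    exact orderOf_dvd_of_le (zpowers_le.mpr hcw)
  rcases dvd_prime_mul hp hq hcd with h | h | h | h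
  · exact absurd h hcp.one_lt.ne'
  · exact Or.inl (zpowers_eq_of_orderOf_eq hcw hxw h)
  · exact Or.inr (zpowers_eq_of_orderOf_eq hcw hzw h)
  · exfalso
    rw [h] at hcp
    rcases (Nat.prime_mul_iff.mp hcp) with ⟨_, h1⟩ | ⟨_, h1⟩
    · exact hq.one_lt.ne' h1
    · exact hp.one_lt.ne' h1

-- exact down-set cardinality for elements of order p*q
lemma dn_ncard_pq {w : G} {p q : ℕ} (hp : p.Prime) (hq : q.Prime) (hpq : p ≠ q)
    (hw : orderOf w = p * q) : (dn w).ncard = p + q - 1 := by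
  have hpd : p ∣ orderOf w := ⟨q, hw⟩
  have hqd : q ∣ orderOf w := ⟨p, by rw [hw, mul_comm]⟩
  have hop : orderOf (w ^ p) = q := by
    rw [orderOf_pow_div hpd, hw, Nat.mul_div_cancel_left _ hp.pos]
  have hoq : orderOf (w ^ q) = p := by
    rw [orderOf_pow_div hqd, hw, Nat.mul_div_cancel _ hq.pos]
  have hsub : ∀ u : ℕ, orderOf (w ^ u) ≠ orderOf w → (zpowers (w ^ u) : Set G) ⊆ dn w := by
    intro u hne' z hz
    have h1 : zpowers z ≤ zpowers (w ^ u) := zpowers_le.mpr hz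
    have h2 : zpowers (w ^ u) ≤ zpowers w := zpowers_le.mpr (Subgroup.npow_mem_zpowers w u)
    refine lt_of_le_of_ne (le_trans h1 h2) (fun he => ?_)
    have h3 : orderOf z = orderOf w := orderOf_eq_of_zpowers_eq he
    have h4 : orderOf z ∣ orderOf (w ^ u) := orderOf_dvd_of_le h1
    have h5 : orderOf (w ^ u) ∣ orderOf w := orderOf_dvd_of_le h2
    have h6 := Nat.le_of_dvd (orderOf_pos _) h4
    have h7 := Nat.le_of_dvd (orderOf_pos _) h5
    have := orderOf_pos w
    apply hne'
    omega
  have hDeq : dn w = (zpowers (w ^ p) : Set G) ∪ (zpowers (w ^ q) : Set G) := by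
    apply subset_antisymm
    · intro z hz
      have hzw : z ∈ zpowers w := zpowers_le.mp (le_of_lt hz)
      have hzd : orderOf z ∣ p * q := by rw [← hw]; exact orderOf_dvd_of_le (le_of_lt hz)
      have hzne : orderOf z ≠ p * q := by
        intro he
        have := orderOf_lt_of_lt (show zpowers z < zpowers w from hz)
        rw [hw] at this
        omega
      rcases dvd_prime_mul hp hq hzd with h | h | h | h
      · left
        have : z = 1 := orderOf_eq_one_iff.mp h
        rw [this]
        exact SetLike.mem_coe.mpr (Subgroup.one_mem _)
      · right
        have h1 : zpowers z = zpowers (w ^ (orderOf w / orderOf z)) := zpowers_eq_pow_div hzw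
        rw [h] at h1
        have h2 : orderOf w / p = q := by rw [hw, Nat.mul_div_cancel_left _ hp.pos]
        rw [h2] at h1
        exact SetLike.mem_coe.mpr (h1 ▸ Subgroup.mem_zpowers z)
      · left
        have h1 : zpowers z = zpowers (w ^ (orderOf w / orderOf z)) := zpowers_eq_pow_div hzw
        rw [h] at h1
        have h2 : orderOf w / q = p := by rw [hw, Nat.mul_div_cancel _ hq.pos]
        rw [h2] at h1
        exact SetLike.mem_coe.mpr (h1 ▸ Subgroup.mem_zpowers z)
      · exact absurd h hzne
    · apply Set.union_subset
      · exact hsub p (by rw [hop, hw]; nlinarith [hp.two_le, hq.two_le])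
      · exact hsub q (by rw [hoq, hw]; nlinarith [hp.two_le, hq.two_le])
  have hco : Nat.Coprime p q := (Nat.coprime_primes hp hq).mpr hpq
  have hcaps : (zpowers (w ^ p) : Set G) ∩ (zpowers (w ^ q) : Set G) = {1} := by
    apply subset_antisymm
    · rintro z ⟨h1, h2⟩
      have d1 : orderOf z ∣ q := by
        rw [← hop]; exact orderOf_dvd_of_le (zpowers_le.mpr h1)
      have d2 : orderOf z ∣ p := by
        rw [← hoq]; exact orderOf_dvd_of_le (zpowers_le.mpr h2)
      have hgd : orderOf z ∣ Nat.gcd q p := Nat.dvd_gcd d1 d2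
      rw [Nat.Coprime.gcd_eq_one hco.symm] at hgd
      have : z = 1 := orderOf_eq_one_iff.mp (Nat.dvd_one.mp hgd)
      exact this
    · intro z hz
      rw [Set.mem_singleton_iff] at hz
      subst hz
      exact ⟨SetLike.mem_coe.mpr (Subgroup.one_mem _), SetLike.mem_coe.mpr (Subgroup.one_mem _)⟩
  have h1 := Set.ncard_union_add_ncard_inter (zpowers (w ^ p) : Set G)
    (zpowers (w ^ q) : Set G) (Set.toFinite _) (Set.toFinite _)
  rw [hcaps, card_zp, card_zp, hop, hoq, Set.ncard_singleton] at h1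
  rw [hDeq]
  have hp2 := hp.two_le
  have hq2 := hq.two_le
  omega

end RPP
namespace RPP
variable {G : Type*} [Group G] [Fintype G]

lemma not_dvd_pq {p q : ℕ} (hp : p.Prime) (hq : q.Prime) (hpq : p ≠ q) :
    ¬ (p + q - 1) ∣ (p * q) := by
  intro h
  have hp2 := hp.two_le
  have hq2 := hq.two_le
  rcases dvd_prime_mul hp hq h with h1 | h1 | h1 | h1
  · omega
  · omega
  · omega
  · have h2 : p * q + 1 = p + q := by omega
    nlinarith

lemma gen_ncard_eq (x : G) : (genCls G x).ncard = orderOf x - (dn x).ncard := by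
  have := orderOf_eq_ncard x
  omega

lemma hat_sat {x y : G} (hy : simEq G y x) : genCls G y ⊆ {z | simEq G z x} :=
  fun z hz => simEq_trans (simEq_of_genCls hz) hy

lemma hat_single_gen_eq {x : G} (hsingle : ∀ v, simEq G v x → zpowers v = zpowers x) :
    {y | simEq G y x} = genCls G x := by
  apply subset_antisymm
  · intro y hy
    exact hsingle y hy
  · intro y hy
    exact simEq_of_genCls hy

lemma hat_single_of_pq {w : G} {p q : ℕ} (hp : p.Prime) (hq : q.Prime) (hpq : p ≠ q)
    (hw : orderOf w = p * q) : ∀ v, simEq G v w → zpowers v = zpowers w := by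
  intro v hv
  by_contra hne
  have hd : (dn w).ncard = p + q - 1 := dn_ncard_pq hp hq hpq hw
  have hp2 := hp.two_le
  have hq2 := hq.two_le
  have hd2 : 2 ≤ (dn w).ncard := by omega
  have hcm := composite_multi hv hne hd2
  have hdvd : (dn w).ncard ∣ p * q := ⟨((dn w).ncard).minFac, by rw [← hw, hcm]; ring⟩
  rw [hd] at hdvd
  exact not_dvd_pq hp hq hpq hdvd

lemma order_preserved_pq {π : Equiv.Perm G} (hπ : AutP π) {w : G} {p q : ℕ}
    (hp : p.Prime) (hq : q.Prime) (hpq : p ≠ q) (hw : orderOf w = p * q) :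
    orderOf (π w) = p * q := by
  have hp2 := hp.two_le
  have hq2 := hq.two_le
  have hsingle := hat_single_of_pq hp hq hpq hw
  have hd : (dn w).ncard = p + q - 1 := dn_ncard_pq hp hq hpq hw
  have hd' : (dn (π w)).ncard = p + q - 1 := by rw [aut_ncard_dn hπ w, hd]
  have hhatw : {y | simEq G y w}.ncard = p * q - (p + q - 1) := by
    rw [hat_single_gen_eq hsingle, gen_ncard_eq, hw, hd]
  have hhatw' : {y | simEq G y (π w)}.ncard = p * q - (p + q - 1) := by
    rw [aut_ncard_hat hπ w, hhatw]
  have hsingle' : ∀ v, simEq G v (π w) → zpowers v = zpowers (π w) := by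
    intro v hv
    by_contra hne
    have hd2' : 2 ≤ (dn (π w)).ncard := by omega
    have horder : ∀ y, simEq G y (π w) →
        orderOf y = ((dn (π w)).ncard).minFac * (dn (π w)).ncard := by
      intro y hy
      have hdny : dn y = dn (π w) := dn_eq_of_simEq hy
      by_cases hcase : zpowers y = zpowers (π w)
      · have hsim2 : simEq G v y := simEq_trans hv (simEq_symm hy)
        have hne2 : zpowers v ≠ zpowers y := by rw [← hcase] at hne; exact hne
        have := composite_multi hsim2 hne2 (by rw [hdny]; exact hd2')
        rwa [hdny] at this
      · have hsim2 : simEq G (π w) y := simEq_symm hy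
        have hne2 : zpowers (π w) ≠ zpowers y := fun h => hcase h.symm
        have := composite_multi hsim2 hne2 (by rw [hdny]; exact hd2')
        rwa [hdny] at this
    set d' := (dn (π w)).ncard with hdd
    set s' := d'.minFac * d' - d' with hss
    have hsat' : ∀ y ∈ {z | simEq G z (π w)}, genCls G y ⊆ {z | simEq G z (π w)} :=
      fun y hy => hat_sat hy
    have hsz' : ∀ y ∈ {z | simEq G z (π w)}, (genCls G y).ncard = s' := by
      intro y hy
      rw [gen_ncard_eq, horder y hy]
      have hdny : dn y = dn (π w) := dn_eq_of_simEq hy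
      rw [hdny]
    have hd'' : d' = p + q - 1 := hd'
    have hdvd := part_dvd s' _ _ rfl hsat' hsz'
    rw [hhatw', ← hd''] at hdvd
    have hds : d' ∣ s' := by
      refine ⟨d'.minFac - 1, ?_⟩
      rw [hss, Nat.mul_sub, mul_one, mul_comm d'.minFac d']
    have hdpq : d' ∣ p * q := by
      have h1 : d' ∣ p * q - d' := dvd_trans hds hdvd
      have h2 : d' ≤ p * q := by
        have : p + q ≤ p * q := by nlinarith
        omega
      have h3 : p * q = (p * q - d') + d' := by omega
      rw [h3]
      exact Nat.dvd_add h1 dvd_rfl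
    rw [hd''] at hdpq
    exact not_dvd_pq hp hq hpq hdpq
  have hgen' : (genCls G (π w)).ncard = p * q - (p + q - 1) := by
    rw [← hat_single_gen_eq hsingle', hhatw']
  have := orderOf_eq_ncard (π w)
  rw [hd', hgen'] at this
  have hle : p + q ≤ p * q := by nlinarith
  omega

end RPP
namespace RPP
variable {G : Type*} [Group G] [Fintype G]

lemma gen_ncard_prime {x : G} (hp : (orderOf x).Prime) :
    (genCls G x).ncard = orderOf x - 1 := by
  rw [gen_ncard_eq, dn_eq_one_of_prime hp, Set.ncard_singleton]

lemma key_prime_multi {π : Equiv.Perm G} (hπ : AutP π) (x : G) (hp : (orderOf x).Prime)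
    (z₀ : G) (hsimz : simEq G z₀ x) (hnez : zpowers z₀ ≠ zpowers x)
    (hup : (upS x).Nonempty) :
    (∃ z', simEq G z' (π x) ∧ zpowers z' ≠ zpowers (π x)) ∧
    {y | simEq G y (π x) ∧ orderOf y = orderOf x}.ncard
      = {y | simEq G y x ∧ orderOf y = orderOf x}.ncard := by
  obtain ⟨w, hw, hmin⟩ := exists_minimal_up hup
  obtain ⟨hqprime, hqne, hwpq, htri⟩ := primeMultiStruct hp hsimz hnez hw hmin
  have hp2 := hp.two_le
  have hq2 := hqprime.two_le
  have hpqne : orderOf x ≠ orderOf z₀ := fun h => hqne h.symm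
  have hπw : orderOf (π w) = orderOf x * orderOf z₀ :=
    order_preserved_pq hπ hp hqprime hpqne hwpq
  -- decomposition of hat x
  have hhatx : {y | simEq G y x} = genCls G x ∪ genCls G z₀ := by
    apply subset_antisymm
    · intro c hc
      rcases htri c hc with h | h
      · exact Or.inl h
      · exact Or.inr h
    · apply Set.union_subset
      · exact hat_sat (simEq_refl x)
      · exact hat_sat hsimz
  have hdisj : Disjoint (genCls G x) (genCls G z₀) := by
    rw [Set.disjoint_left]
    intro u hu hu'
    have h1 : zpowers u = zpowers x := hu
    have h2 : zpowers u = zpowers z₀ := hu'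
    exact hnez (h2 ▸ h1 ▸ rfl : zpowers z₀ = zpowers x)
  have hgx : (genCls G x).ncard = orderOf x - 1 := gen_ncard_prime hp
  have hgz : (genCls G z₀).ncard = orderOf z₀ - 1 := gen_ncard_prime hqprime
  have hhatcard : {y | simEq G y x}.ncard = orderOf x + orderOf z₀ - 2 := by
    rw [hhatx, Set.ncard_union_eq hdisj (Set.toFinite _) (Set.toFinite _), hgx, hgz]
    omega
  -- π x has prime order s
  have hdnpx : (dn (π x)).ncard = 1 := by
    rw [aut_ncard_dn hπ x]
    exact ncard_dn_eq_one_iff.mpr hp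
  have hs : (orderOf (π x)).Prime := ncard_dn_eq_one_iff.mp hdnpx
  have hs2 := hs.two_le
  -- π w is above π x
  have hπwup : π w ∈ upS (π x) := by
    rw [← aut_image_upS hπ x]
    exact ⟨w, hw, rfl⟩
  have hsdvd : orderOf (π x) ∣ orderOf x * orderOf z₀ := by
    rw [← hπw]
    exact orderOf_dvd_of_le (le_of_lt hπwup)
  have hspq : orderOf (π x) = orderOf x ∨ orderOf (π x) = orderOf z₀ := by
    rcases dvd_prime_mul hp hqprime hsdvd with h | h | h | h
    · exact absurd h hs.one_lt.ne'
    · exact Or.inl h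
    · exact Or.inr h
    · exfalso
      rw [h] at hs
      rcases Nat.prime_mul_iff.mp hs with ⟨_, h1⟩ | ⟨_, h1⟩
      · exact hqprime.one_lt.ne' h1
      · exact hp.one_lt.ne' h1
  have hhatpx : {y | simEq G y (π x)}.ncard = orderOf x + orderOf z₀ - 2 := by
    rw [aut_ncard_hat hπ x, hhatcard]
  -- hat (π x) is multi
  have hmulti' : ∃ z', simEq G z' (π x) ∧ zpowers z' ≠ zpowers (π x) := by
    by_contra hnone
    push_neg at hnone
    have hsg : {y | simEq G y (π x)} = genCls G (π x) := hat_single_gen_eq hnone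
    have : (genCls G (π x)).ncard = orderOf (π x) - 1 := gen_ncard_prime hs
    rw [hsg, this] at hhatpx
    rcases hspq with h | h <;> omega
  obtain ⟨z', hz', hnez'⟩ := hmulti'
  refine ⟨⟨z', hz', hnez'⟩, ?_⟩
  -- minimality of π w in upS (π x)
  have hmin' : ∀ v ∈ upS (π x), ¬ zpowers v < zpowers (π w) := by
    intro v hv hlt
    rw [← aut_image_upS hπ x] at hv
    obtain ⟨u, hu, rfl⟩ := hv
    exact hmin u hu ((hπ w u).mp hlt)
  obtain ⟨hq'p, hq'ne, hw'pq, htri'⟩ := primeMultiStruct hs hz' hnez' hπwup hmin'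
  have hq'2 := hq'p.two_le
  -- identify the two primes
  have hprod : orderOf (π x) * orderOf z' = orderOf x * orderOf z₀ := by
    rw [← hw'pq, hπw]
  -- compute Src
  have hsrc : {y | simEq G y x ∧ orderOf y = orderOf x} = genCls G x := by
    apply subset_antisymm
    · rintro y ⟨hy1, hy2⟩
      rcases htri y hy1 with h | h
      · exact h
      · exfalso
        have : orderOf y = orderOf z₀ := orderOf_eq_of_zpowers_eq h
        omega
    · intro y hy
      exact ⟨simEq_trans (simEq_of_genCls hy) (simEq_refl x), orderOf_eq_of_gen hy⟩
  rcases hspq with hcase | hcase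
  · -- orderOf (π x) = orderOf x
    have htgt : {y | simEq G y (π x) ∧ orderOf y = orderOf x} = genCls G (π x) := by
      apply subset_antisymm
      · rintro y ⟨hy1, hy2⟩
        rcases htri' y hy1 with h | h
        · exact h
        · exfalso
          have h1 : orderOf y = orderOf z' := orderOf_eq_of_zpowers_eq h
          have h2 : orderOf z' ≠ orderOf (π x) := fun hc => hq'ne hc
          -- orderOf (π x) * orderOf z' = orderOf x * orderOf z₀, orderOf (π x) = orderOf x
          -- so orderOf z' = orderOf z₀ ≠ orderOf x
          have h3 : orderOf z' = orderOf z₀ := by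
            rw [hcase] at hprod
            exact Nat.eq_of_mul_eq_mul_left (by omega) hprod
          omega
      · intro y hy
        refine ⟨simEq_trans (simEq_of_genCls hy) (simEq_refl (π x)), ?_⟩
        rw [orderOf_eq_of_gen hy, hcase]
    rw [hsrc, htgt, gen_ncard_prime hp, gen_ncard_prime hs, hcase]
  · -- orderOf (π x) = orderOf z₀ ; then orderOf z' = orderOf x
    have hsnex : orderOf (π x) ≠ orderOf x := by omega
    have hq'x : orderOf z' = orderOf x := by
      rw [hcase] at hprod
      rw [mul_comm (orderOf x) (orderOf z₀)] at hprod
      exact Nat.eq_of_mul_eq_mul_left (by omega) hprod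
    have htgt : {y | simEq G y (π x) ∧ orderOf y = orderOf x} = genCls G z' := by
      apply subset_antisymm
      · rintro y ⟨hy1, hy2⟩
        rcases htri' y hy1 with h | h
        · exfalso
          have : orderOf y = orderOf (π x) := orderOf_eq_of_zpowers_eq h
          omega
        · exact h
      · intro y hy
        refine ⟨simEq_trans (simEq_of_genCls hy) hz', ?_⟩
        rw [orderOf_eq_of_gen hy, hq'x]
    have hdnz' : (dn z').ncard = 1 := by
      rw [dn_eq_of_simEq hz', hdnpx]
    rw [hsrc, htgt, gen_ncard_prime hp, gen_ncard_eq, hdnz', hq'x]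

end RPP
namespace RPP
variable {G : Type*} [Group G] [Fintype G]

lemma hat_multi_order {x z₀ : G} (hsimz : simEq G z₀ x) (hnez : zpowers z₀ ≠ zpowers x)
    (hd : 2 ≤ (dn x).ncard) :
    ∀ y, simEq G y x → orderOf y = ((dn x).ncard).minFac * (dn x).ncard := by
  intro y hy
  have hdny : dn y = dn x := dn_eq_of_simEq hy
  by_cases hcase : zpowers y = zpowers x
  · have hsim2 : simEq G z₀ y := simEq_trans hsimz (simEq_symm hy)
    have hne2 : zpowers z₀ ≠ zpowers y := by rw [← hcase] at hnez; exact hnez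
    have := composite_multi hsim2 hne2 (by rw [hdny]; exact hd)
    rwa [hdny] at this
  · have hsim2 : simEq G x y := simEq_symm hy
    have hne2 : zpowers x ≠ zpowers y := fun h => hcase h.symm
    have := composite_multi hsim2 hne2 (by rw [hdny]; exact hd)
    rwa [hdny] at this

lemma key_comp_contra {π : Equiv.Perm G} (hπ : AutP π) (x z₀ : G)
    (hd : 2 ≤ (dn x).ncard)
    (hsimz : simEq G z₀ x) (hnez : zpowers z₀ ≠ zpowers x)
    (hsingle' : ∀ v, simEq G v (π x) → zpowers v = zpowers (π x)) : False := by
  have hdpos : 0 < (dn x).ncard := by omega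
  have hp₀ : ((dn x).ncard).minFac.Prime := Nat.minFac_prime (by omega)
  have hp₀2 := hp₀.two_le
  have hp₀d : ((dn x).ncard).minFac ∣ (dn x).ncard := Nat.minFac_dvd _
  have horder := hat_multi_order hsimz hnez hd
  have hox : orderOf x = ((dn x).ncard).minFac * (dn x).ncard := horder x (simEq_refl x)
  have hdltn : (dn x).ncard < orderOf x := by
    rw [hox]
    calc (dn x).ncard = 1 * (dn x).ncard := (one_mul _).symm
    _ < ((dn x).ncard).minFac * (dn x).ncard := by
        exact (Nat.mul_lt_mul_right hdpos).mpr (by omega)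
  -- class sizes
  have hsz : ∀ y, simEq G y x → (genCls G y).ncard = orderOf x - (dn x).ncard := by
    intro y hy
    rw [gen_ncard_eq, horder y hy, dn_eq_of_simEq hy, ← hox]
  -- |hat x| = s * c with c ≥ 2
  have hdvd := part_dvd (orderOf x - (dn x).ncard) ({y | simEq G y x}.ncard)
    {y | simEq G y x} rfl (fun y hy => hat_sat hy) (fun y hy => hsz y hy)
  obtain ⟨c, hc⟩ := hdvd
  have hsublb : (genCls G x ∪ genCls G z₀) ⊆ {y | simEq G y x} := by
    apply Set.union_subset
    · exact hat_sat (simEq_refl x)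
    · exact hat_sat hsimz
  have hdisj : Disjoint (genCls G x) (genCls G z₀) := by
    rw [Set.disjoint_left]
    intro u hu hu'
    have h1 : zpowers u = zpowers x := hu
    have h2 : zpowers u = zpowers z₀ := hu'
    exact hnez (h2 ▸ h1 ▸ rfl : zpowers z₀ = zpowers x)
  have hlb : 2 * (orderOf x - (dn x).ncard) ≤ {y | simEq G y x}.ncard := by
    have h1 := Set.ncard_le_ncard hsublb (Set.toFinite _)
    rw [Set.ncard_union_eq hdisj (Set.toFinite _) (Set.toFinite _)] at h1
    rw [hsz x (simEq_refl x), hsz z₀ hsimz] at h1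
    omega
  have hspos : 0 < orderOf x - (dn x).ncard := by omega
  have hc2 : 2 ≤ c := by
    rcases Nat.lt_or_ge c 2 with h | h
    · exfalso
      interval_cases c <;> omega
    · exact h
  -- order of π x
  have hdn' : (dn (π x)).ncard = (dn x).ncard := aut_ncard_dn hπ x
  have hhat' : {y | simEq G y (π x)}.ncard = {y | simEq G y x}.ncard := aut_ncard_hat hπ x
  have hgen' : (genCls G (π x)).ncard = {y | simEq G y x}.ncard := by
    rw [← hat_single_gen_eq hsingle', hhat']
  have hn' : orderOf (π x) = (dn x).ncard + (orderOf x - (dn x).ncard) * c := by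
    have := orderOf_eq_ncard (π x)
    rw [hdn', hgen', hc] at this
    omega
  -- p₀ divides orderOf (π x)
  have hp₀s : ((dn x).ncard).minFac ∣ orderOf x - (dn x).ncard := by
    have : orderOf x - (dn x).ncard = (dn x).ncard * (((dn x).ncard).minFac - 1) := by
      rw [hox, Nat.mul_sub, mul_one, mul_comm ((dn x).ncard).minFac ((dn x).ncard)]
    rw [this]
    exact dvd_mul_of_dvd_left hp₀d _
  have hp₀n' : ((dn x).ncard).minFac ∣ orderOf (π x) := by
    rw [hn']
    exact Nat.dvd_add hp₀d (dvd_mul_of_dvd_left hp₀s c)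
  -- the subgroup bound
  have hn'pos : 0 < orderOf (π x) := orderOf_pos _
  have hHord : orderOf ((π x) ^ ((dn x).ncard).minFac)
      = orderOf (π x) / ((dn x).ncard).minFac := orderOf_pow_div hp₀n'
  have hgensub : genCls G (π x) ⊆
      ((zpowers (π x) : Subgroup G) : Set G) \ ((zpowers ((π x) ^ ((dn x).ncard).minFac) : Subgroup G) : Set G) := by
    intro u hu
    have hu1 : zpowers u = zpowers (π x) := hu
    constructor
    · exact SetLike.mem_coe.mpr (by rw [← hu1]; exact Subgroup.mem_zpowers u)
    · intro hmem
      have h1 : orderOf u ∣ orderOf (π x) / ((dn x).ncard).minFac := by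
        rw [← hHord]
        exact orderOf_dvd_of_le (zpowers_le.mpr (SetLike.mem_coe.mp hmem))
      have h2 : orderOf u = orderOf (π x) := orderOf_eq_of_zpowers_eq hu1
      have h3 : orderOf (π x) / ((dn x).ncard).minFac < orderOf (π x) :=
        Nat.div_lt_self hn'pos hp₀.one_lt
      have h4 := Nat.le_of_dvd (by
        refine Nat.div_pos (Nat.le_of_dvd hn'pos hp₀n') hp₀.pos) h1
      omega
  have hbound : (genCls G (π x)).ncard ≤ orderOf (π x) - orderOf (π x) / ((dn x).ncard).minFac := by
    have h1 := Set.ncard_le_ncard hgensub (Set.toFinite _)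
    have hsubsub : ((zpowers ((π x) ^ ((dn x).ncard).minFac) : Subgroup G) : Set G) ⊆
        ((zpowers (π x) : Subgroup G) : Set G) := by
      intro u hu
      exact SetLike.mem_coe.mpr
        ((zpowers_le.mpr (Subgroup.npow_mem_zpowers _ _)) (SetLike.mem_coe.mp hu))
    rw [Set.ncard_diff hsubsub (Set.toFinite _), card_zp, card_zp, hHord] at h1
    exact h1
  -- final contradiction
  have hgeneq : (genCls G (π x)).ncard = orderOf (π x) - (dn x).ncard := by
    rw [hgen', hc, hn']
    omega
  have hdivle : orderOf (π x) / ((dn x).ncard).minFac ≤ (dn x).ncard := by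
    have hdvd2 : orderOf (π x) / ((dn x).ncard).minFac ≤ orderOf (π x) := Nat.div_le_self _ _
    have hdle : (dn x).ncard ≤ orderOf (π x) := by rw [hn']; omega
    omega
  have hmul : orderOf (π x) = ((dn x).ncard).minFac * (orderOf (π x) / ((dn x).ncard).minFac) :=
    (Nat.mul_div_cancel' hp₀n').symm
  have hle : orderOf (π x) ≤ orderOf x := by
    rw [hmul, hox]
    exact Nat.mul_le_mul_left _ hdivle
  have hsc : 2 * (orderOf x - (dn x).ncard) ≤ (orderOf x - (dn x).ncard) * c := by
    rw [mul_comm ((orderOf x - (dn x).ncard)) c]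
    exact Nat.mul_le_mul_right _ hc2
  rw [hn'] at hle
  omega

end RPP
namespace RPP
variable {G : Type*} [Group G] [Fintype G]

lemma strata_congr {a b : G} (h : simEq G a b) (n : ℕ) :
    {y | simEq G y a ∧ orderOf y = n} = {y | simEq G y b ∧ orderOf y = n} := by
  ext y
  exact and_congr_left' ⟨fun hy => simEq_trans hy h, fun hy => simEq_trans hy (simEq_symm h)⟩

lemma src_single_eq {x : G} (hsingle : ∀ v, simEq G v x → zpowers v = zpowers x)
    {n : ℕ} (hn : orderOf x = n) :
    {y | simEq G y x ∧ orderOf y = n} = genCls G x := by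
  apply subset_antisymm
  · rintro y ⟨hy1, _⟩
    exact hsingle y hy1
  · intro y hy
    exact ⟨simEq_of_genCls hy, by rw [orderOf_eq_of_gen hy, hn]⟩

lemma hat_eq_of_single {x : G} (hsingle : ∀ v, simEq G v x → zpowers v = zpowers x) :
    {y | simEq G y x} = genCls G x :=
  hat_single_gen_eq hsingle

lemma key {π : Equiv.Perm G} (hπ : AutP π) (x : G) :
    {y | simEq G y (π x) ∧ orderOf y = orderOf x}.ncard
      = {y | simEq G y x ∧ orderOf y = orderOf x}.ncard := by
  have hsymm : AutP π.symm := fun a b => aut_inv hπ a b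
  have hdn' : (dn (π x)).ncard = (dn x).ncard := aut_ncard_dn hπ x
  have hhat' : {y | simEq G y (π x)}.ncard = {y | simEq G y x}.ncard := aut_ncard_hat hπ x
  rcases Nat.lt_or_ge (dn x).ncard 2 with hdlt | hd
  · rcases Nat.lt_or_ge (dn x).ncard 1 with hd0 | hd1
    · -- d = 0 : x = 1 and π x = 1
      have hd0' : (dn x).ncard = 0 := by omega
      have hx1 : x = 1 := by
        apply dn_empty_iff.mp
        exact (Set.ncard_eq_zero (Set.toFinite _)).mp hd0'
      have hpx1 : π x = 1 := by
        apply dn_empty_iff.mp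
        apply (Set.ncard_eq_zero (Set.toFinite _)).mp
        rw [hdn', hd0']
      rw [show π x = x from hpx1.trans hx1.symm]
    · -- d = 1 : prime order
      have hd1' : (dn x).ncard = 1 := by omega
      have hp : (orderOf x).Prime := ncard_dn_eq_one_iff.mp hd1'
      have hs : (orderOf (π x)).Prime := by
        apply ncard_dn_eq_one_iff.mp
        rw [hdn', hd1']
      rcases Set.eq_empty_or_nonempty (upS x) with hupe | hup
      · -- up-set empty : π x ≃ x
        have hdnx1 : dn x = {1} := dn_eq_one_of_prime hp
        have hdnpx1 : dn (π x) = {1} := dn_eq_one_of_prime hs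
        have hupspx : upS (π x) = ∅ := by
          rw [← aut_image_upS hπ x, hupe, Set.image_empty]
        have hsimpx : simEq G (π x) x :=
          simEq_of_dn_upS (by rw [hdnpx1, hdnx1]) (by rw [hupspx, hupe])
        rw [strata_congr hsimpx (orderOf x)]
      · by_cases hmulti : ∃ z₀, simEq G z₀ x ∧ zpowers z₀ ≠ zpowers x
        · obtain ⟨z₀, hz₀, hnez₀⟩ := hmulti
          exact (key_prime_multi hπ x hp z₀ hz₀ hnez₀ hup).2
        · push_neg at hmulti
          -- single at x; show single at π x
          have hsingle' : ∀ v, simEq G v (π x) → zpowers v = zpowers (π x) := by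
            intro v hv
            by_contra hne
            have hup' : (upS (π x)).Nonempty := by
              rw [← aut_image_upS hπ x]
              exact hup.image π
            have h2 := (key_prime_multi hsymm (π x) hs v hv hne hup').1
            obtain ⟨z'', hz'', hnez''⟩ := h2
            rw [Equiv.symm_apply_apply] at hz'' hnez''
            exact hnez'' (hmulti z'' hz'')
          -- equal orders
          have hgx : {y | simEq G y x} = genCls G x :=
            hat_eq_of_single (fun v hv => hmulti v hv)
          have hgpx : {y | simEq G y (π x)} = genCls G (π x) := hat_eq_of_single hsingle'
          have hordeq : orderOf (π x) = orderOf x := by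
            have h1 : (genCls G x).ncard = orderOf x - 1 := gen_ncard_prime hp
            have h2 : (genCls G (π x)).ncard = orderOf (π x) - 1 := gen_ncard_prime hs
            rw [hgx, h1] at hhat'
            rw [hgpx, h2] at hhat'
            have := hp.two_le
            have := hs.two_le
            omega
          rw [src_single_eq (fun v hv => hmulti v hv) rfl,
            src_single_eq hsingle' hordeq, gen_ncard_prime hp, gen_ncard_prime hs, hordeq]
  · -- composite case
    by_cases hmulti : ∃ z₀, simEq G z₀ x ∧ zpowers z₀ ≠ zpowers x
    · obtain ⟨z₀, hz₀, hnez₀⟩ := hmulti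
      by_cases hmulti' : ∃ z', simEq G z' (π x) ∧ zpowers z' ≠ zpowers (π x)
      · -- multi-multi
        obtain ⟨z', hz', hnez'⟩ := hmulti'
        have horder := hat_multi_order hz₀ hnez₀ hd
        have horder' := hat_multi_order hz' hnez' (by rw [hdn']; exact hd)
        have hsrc : {y | simEq G y x ∧ orderOf y = orderOf x} = {y | simEq G y x} := by
          apply subset_antisymm
          · exact fun y hy => hy.1
          · intro y hy
            exact ⟨hy, by rw [horder y hy, ← horder x (simEq_refl x)]⟩
        have htgt : {y | simEq G y (π x) ∧ orderOf y = orderOf x}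
            = {y | simEq G y (π x)} := by
          apply subset_antisymm
          · exact fun y hy => hy.1
          · intro y hy
            refine ⟨hy, ?_⟩
            rw [horder' y hy, hdn', ← horder x (simEq_refl x)]
        rw [hsrc, htgt, hhat']
      · -- multi at x, single at π x : contradiction
        push_neg at hmulti'
        exact absurd (key_comp_contra hπ x z₀ hd hz₀ hnez₀
          (fun v hv => hmulti' v hv)) (fun h => h)
    · push_neg at hmulti
      by_cases hmulti' : ∃ z', simEq G z' (π x) ∧ zpowers z' ≠ zpowers (π x)
      · -- single at x, multi at π x : contradiction via π.symm
        obtain ⟨z', hz', hnez'⟩ := hmulti'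
        exfalso
        refine key_comp_contra hsymm (π x) z' (by rw [hdn']; exact hd) hz' hnez' ?_
        intro v hv
        rw [Equiv.symm_apply_apply] at hv ⊢
        exact hmulti v hv
      · -- single-single
        push_neg at hmulti'
        have hgx : {y | simEq G y x} = genCls G x :=
          hat_eq_of_single (fun v hv => hmulti v hv)
        have hgpx : {y | simEq G y (π x)} = genCls G (π x) :=
          hat_eq_of_single (fun v hv => hmulti' v hv)
        have hordeq : orderOf (π x) = orderOf x := by
          have h1 := orderOf_eq_ncard x
          have h2 := orderOf_eq_ncard (π x)
          rw [hgx] at hhat'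
          rw [hgpx] at hhat'
          omega
        rw [src_single_eq (fun v hv => hmulti v hv) rfl,
          src_single_eq (fun v hv => hmulti' v hv) hordeq]
        have h1 := orderOf_eq_ncard x
        have h2 := orderOf_eq_ncard (π x)
        omega

end RPP

namespace RPP
variable {G : Type*} [Group G] [Fintype G]

open Classical in
noncomputable def pick (A B : Set G) : G → G :=
  if h : ∃ g : G → G, Set.BijOn g A B ∧ ∀ y ∈ A, g '' genCls G y = genCls G (g y)
  then h.choose else id

open Classical in
lemma pick_spec {A B : Set G}
    (h : ∃ g : G → G, Set.BijOn g A B ∧ ∀ y ∈ A, g '' genCls G y = genCls G (g y)) :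
    Set.BijOn (pick A B) A B ∧
      ∀ y ∈ A, (pick A B) '' genCls G y = genCls G ((pick A B) y) := by
  rw [pick, dif_pos h]
  exact h.choose_spec

lemma exists_sigma {π : Equiv.Perm G} (hπ : AutP π) :
    ∃ σ : Equiv.Perm G, IsPPerm G σ ∧ ∀ x, simEq G (σ x) (π x) := by
  classical
  set Src : G → Set G := fun x => {y | simEq G y x ∧ orderOf y = orderOf x} with hSrcDef
  set Tgt : G → Set G := fun x => {y | simEq G y (π x) ∧ orderOf y = orderOf x} with hTgtDef
  have hxSrc : ∀ x, x ∈ Src x := fun x => ⟨simEq_refl x, rfl⟩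
  have hex : ∀ x, ∃ g : G → G, Set.BijOn g (Src x) (Tgt x) ∧
      ∀ y ∈ Src x, g '' genCls G y = genCls G (g y) := by
    intro x
    apply exists_gen_bij (Src x).ncard (Src x) (Tgt x) rfl (key hπ x)
    · rintro y ⟨hy1, hy2⟩ z hz
      exact ⟨simEq_trans (simEq_of_genCls hz) hy1, by rw [orderOf_eq_of_gen hz, hy2]⟩
    · rintro y ⟨hy1, hy2⟩ z hz
      exact ⟨simEq_trans (simEq_of_genCls hz) hy1, by rw [orderOf_eq_of_gen hz, hy2]⟩
    · rintro y ⟨hy1, hy2⟩ z ⟨hz1, hz2⟩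
      rw [gen_ncard_eq y, gen_ncard_eq z]
      have h1 : dn y = dn x := dn_eq_of_simEq hy1
      have h2 : dn z = dn (π x) := dn_eq_of_simEq hz1
      rw [h1, h2, aut_ncard_dn hπ x, hy2, hz2]
  set f : G → G := fun x => pick (Src x) (Tgt x) x with hfDef
  have hsame : ∀ x x', x' ∈ Src x → Src x' = Src x ∧ Tgt x' = Tgt x := by
    rintro x x' ⟨hx1, hx2⟩
    constructor
    · ext y
      show (simEq G y x' ∧ orderOf y = orderOf x') ↔ (simEq G y x ∧ orderOf y = orderOf x)
      rw [hx2]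
      exact and_congr_left'
        ⟨fun hy => simEq_trans hy hx1, fun hy => simEq_trans hy (simEq_symm hx1)⟩
    · ext y
      show (simEq G y (π x') ∧ orderOf y = orderOf x') ↔
        (simEq G y (π x) ∧ orderOf y = orderOf x)
      rw [hx2]
      have hps : simEq G (π x') (π x) := aut_simEq hπ hx1
      exact and_congr_left'
        ⟨fun hy => simEq_trans hy hps, fun hy => simEq_trans hy (simEq_symm hps)⟩
  have hfval : ∀ x x', x' ∈ Src x → f x' = pick (Src x) (Tgt x) x' := by
    intro x x' hx'
    obtain ⟨h1, h2⟩ := hsame x x' hx'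
    show pick (Src x') (Tgt x') x' = pick (Src x) (Tgt x) x'
    rw [h1, h2]
  have hfx : ∀ x, f x ∈ Tgt x := fun x => (pick_spec (hex x)).1.1 (hxSrc x)
  have hreflect : ∀ u v : G, simEq G (π u) (π v) → simEq G u v := by
    intro u v h t
    have := h (π t)
    unfold rpAdj at this ⊢
    rw [hπ u t, hπ t u, hπ v t, hπ t v] at this
    exact this
  have hinj : Function.Injective f := by
    intro u v huv
    by_cases hc : v ∈ Src u
    · have hfv : f v = pick (Src u) (Tgt u) v := hfval u v hc
      have hfu : f u = pick (Src u) (Tgt u) u := rfl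
      apply (pick_spec (hex u)).1.2.1 (hxSrc u) hc
      rw [← hfu, ← hfv]
      exact huv
    · exfalso
      have h1 := hfx u
      have h2 := hfx v
      rw [← huv] at h2
      obtain ⟨h1a, h1b⟩ := h1
      obtain ⟨h2a, h2b⟩ := h2
      have hsimp : simEq G (π u) (π v) := simEq_trans (simEq_symm h1a) h2a
      have := hreflect u v hsimp
      exact hc ⟨simEq_symm this, by omega⟩
  have hbij : Function.Bijective f := Finite.injective_iff_bijective.mp hinj
  refine ⟨Equiv.ofBijective f hbij, ⟨?_, ?_, ?_⟩, ?_⟩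
  · intro x
    show orderOf (f x) = orderOf x
    exact (hfx x).2
  · -- gen classes
    intro x
    show f '' genCls G x = genCls G (f x)
    have hgsub : genCls G x ⊆ Src x := fun z hz =>
      ⟨simEq_of_genCls hz, orderOf_eq_of_gen hz⟩
    have himg : f '' genCls G x = (pick (Src x) (Tgt x)) '' genCls G x := by
      apply Set.image_congr
      intro z hz
      exact hfval x z (hgsub hz)
    rw [himg]
    exact (pick_spec (hex x)).2 x (hxSrc x)
  · -- order of subgroups
    intro x y
    have hgen : ∀ a : G, f '' genCls G a = genCls G (f a) := by
      intro a
      have hgsub : genCls G a ⊆ Src a := fun z hz =>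
        ⟨simEq_of_genCls hz, orderOf_eq_of_gen hz⟩
      have himg : f '' genCls G a = (pick (Src a) (Tgt a)) '' genCls G a := by
        apply Set.image_congr
        intro z hz
        exact hfval a z (hgsub hz)
      rw [himg]
      exact (pick_spec (hex a)).2 a (hxSrc a)
    show zpowers y ≤ zpowers x ↔ zpowers (f y) ≤ zpowers (f x)
    constructor
    · intro h
      rcases lt_or_eq_of_le h with hlt | heq
      · have h1 : zpowers (π y) < zpowers (π x) := (hπ x y).mpr hlt
        have h2 : π y ∈ dn (f x) := by
          rw [dn_eq_of_simEq (hfx x).1]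
          exact h1
        have h3 : f x ∈ upS (f y) := by
          rw [upS_eq_of_simEq (hfx y).1]
          exact (h2 : zpowers (π y) < zpowers (f x))
        exact le_of_lt h3
      · have hy : y ∈ genCls G x := heq
        have : f y ∈ genCls G (f x) := by
          rw [← hgen x]
          exact Set.mem_image_of_mem f hy
        exact le_of_eq this
    · intro h
      rcases lt_or_eq_of_le h with hlt | heq
      · have h1 : f x ∈ upS (π y) := by
          rw [← upS_eq_of_simEq (hfx y).1]
          exact hlt
        have h2 : π y ∈ dn (π x) := by
          rw [← dn_eq_of_simEq (hfx x).1]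
          exact (h1 : zpowers (π y) < zpowers (f x))
        exact le_of_lt ((hπ x y).mp h2)
      · have : f y ∈ genCls G (f x) := heq
        rw [← hgen x] at this
        obtain ⟨z, hz, hfz⟩ := this
        have : z = y := hinj hfz
        rw [← this]
        exact le_of_eq hz
  · intro x
    show simEq G (f x) (π x)
    exact (hfx x).1

end RPP

end RPPproof

/-- `Aut(→RP(G)) = (∏ Sᵤ̂ᵢ) · P(G)`: a permutation of a finite group `G` is an
automorphism of the directed reduced power graph iff it is a product `τ · σ` where `τ` fixes
every `≃`-class setwise and `σ` is a `P(G)`-permutation. -/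
theorem aut_DRP_eq_prod {G : Type*} [Group G] [Fintype G] (π : Equiv.Perm G) :
    π ∈ DRPAut G ↔
      ∃ τ σ : Equiv.Perm G, FixesClasses G τ ∧ IsPPerm G σ ∧ π = τ * σ := by
  constructor
  · intro hmem
    have hπ : RPP.AutP π := hmem
    obtain ⟨σ, hσPP, hσsim⟩ := RPP.exists_sigma hπ
    refine ⟨π * σ⁻¹, σ, ?_, hσPP, by group⟩
    intro x
    have h1 : (π * σ⁻¹) x = π (σ⁻¹ x) := rfl
    have h2 : simEq G (σ (σ⁻¹ x)) (π (σ⁻¹ x)) := hσsim (σ⁻¹ x)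
    rw [show σ (σ⁻¹ x) = x from σ.apply_symm_apply x] at h2
    rw [h1]
    exact RPP.simEq_symm h2
  · rintro ⟨τ, σ, hτ, hσ, rfl⟩
    have hτmem : τ ∈ DRPAut G := by
      show ∀ x y : G, rpArc G (τ x) (τ y) ↔ rpArc G x y
      intro x y
      have hdx : RPP.dn (τ x) = RPP.dn x := RPP.dn_eq_of_simEq (hτ x)
      have huy : RPP.upS (τ y) = RPP.upS y := RPP.upS_eq_of_simEq (hτ y)
      constructor
      · intro h
        have h1 : τ y ∈ RPP.dn x := by rw [← hdx]; exact h
        have h2 : x ∈ RPP.upS y := by rw [← huy]; exact h1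
        exact h2
      · intro h
        have h1 : x ∈ RPP.upS (τ y) := by rw [huy]; exact h
        have h2 : τ y ∈ RPP.dn (τ x) := by rw [hdx]; exact h1
        exact h2
    have hσmem : σ ∈ DRPAut G := by
      show ∀ x y : G, rpArc G (σ x) (σ y) ↔ rpArc G x y
      intro x y
      have h3 := hσ.2.2
      constructor
      · intro h
        have h' : zpowers (σ y) < zpowers (σ x) := h
        show zpowers y < zpowers x
        rw [lt_iff_le_not_ge] at h' ⊢
        exact ⟨(h3 x y).mpr h'.1, fun hle => h'.2 ((h3 y x).mp hle)⟩
      · intro h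
        have h' : zpowers y < zpowers x := h
        show zpowers (σ y) < zpowers (σ x)
        rw [lt_iff_le_not_ge] at h' ⊢
        exact ⟨(h3 x y).mp h'.1, fun hle => h'.2 ((h3 y x).mpr hle)⟩
    exact mul_mem hτmem hσmem
end

section
/- Let G be a finite group and let x, y be non-identity elements of G with ⟨y⟩ ⊊ ⟨x⟩. If the ≃-class x̂ is of Type II, then |ŷ| < |x̂|. -/
open Subgroup Set

variable (G : Type*) [Group G]

section Aux
variable {G : Type*} [Group G]


lemma zpowersIsCyclic (g : G) : IsCyclic (zpowers g) := by
  refine ⟨⟨⟨g, mem_zpowers g⟩, fun x => ?_⟩⟩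
  obtain ⟨h, hh⟩ := x
  obtain ⟨n, hn⟩ := mem_zpowers_iff.mp hh
  exact mem_zpowers_iff.mpr ⟨n, by ext; simpa⟩

lemma zpowers_le_of_orderOf_dvd [Fintype G] {x u v : G} (hu : u ∈ zpowers x) (hv : v ∈ zpowers x)
    (h : orderOf u ∣ orderOf v) : zpowers u ≤ zpowers v := by
  classical
  haveI := zpowersIsCyclic x
  set C := zpowers x
  set U : C := ⟨u, hu⟩ with hU
  set V : C := ⟨v, hv⟩ with hV
  set k := orderOf u with hk
  have hk0 : 0 < k := orderOf_pos u
  have hUo : orderOf U = k := Subgroup.orderOf_mk u hu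
  set W : C := V ^ (orderOf v / k) with hW
  have hWo : orderOf W = k := by
    rw [hW, orderOf_pow, Subgroup.orderOf_mk, Nat.gcd_eq_right (Nat.div_dvd_of_dvd h),
      Nat.div_div_self h (orderOf_pos v).ne']
  -- both zpowers U and zpowers W equal the filter set
  set S := Finset.univ.filter (fun a : C => a ^ k = 1) with hS
  have hScard : S.card ≤ k := IsCyclic.card_pow_eq_one_le hk0
  have hsub : ∀ z : C, orderOf z = k →
      (Finset.univ.filter (· ∈ zpowers z)) = S := by
    intro z hz
    have hsub1 : (Finset.univ.filter (· ∈ zpowers z)) ⊆ S := by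
      intro a ha
      rw [hS]
      simp only [Finset.mem_filter, Finset.mem_univ, true_and] at ha ⊢
      have := orderOf_dvd_of_mem_zpowers ha
      rw [hz] at this
      exact orderOf_dvd_iff_pow_eq_one.mp this
    have hcard : (Finset.univ.filter (· ∈ zpowers z)).card = k := by
      rw [← hz, ← Nat.card_zpowers z, Nat.card_eq_fintype_card, Fintype.card_subtype]
    exact Finset.eq_of_subset_of_card_le hsub1 (by omega)
  have hUW : U ∈ zpowers W := by
    have h1 := hsub U hUo
    have h2 := hsub W hWo
    have : U ∈ Finset.univ.filter (· ∈ zpowers W) := by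
      rw [h2, ← h1]; simp [mem_zpowers]
    simpa using this
  obtain ⟨n, hn⟩ := mem_zpowers_iff.mp hUW
  have hval := congrArg (Subtype.val) hn
  rw [Subgroup.zpowers_le]
  rw [hW, hV] at hval
  push_cast at hval
  have hval' : (v ^ (orderOf v / k)) ^ n = u := hval
  rw [← hval']
  exact Subgroup.zpow_mem _ (Subgroup.pow_mem _ (mem_zpowers v) _) n

lemma zpowers_eq_of_orderOf_eq [Fintype G] {x u v : G} (hu : u ∈ zpowers x) (hv : v ∈ zpowers x)
    (h : orderOf u = orderOf v) : zpowers u = zpowers v :=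
  le_antisymm (zpowers_le_of_orderOf_dvd hu hv h.dvd)
    (zpowers_le_of_orderOf_dvd hv hu h.symm.dvd)

lemma orderOf_eq_of_zpowers_eq {u v : G} (h : zpowers u = zpowers v) :
    orderOf u = orderOf v := by
  rw [← Nat.card_zpowers, ← Nat.card_zpowers, h]

lemma zpowers_lt_iff [Fintype G] {x u v : G} (hu : u ∈ zpowers x) (hv : v ∈ zpowers x) :
    zpowers u < zpowers v ↔ orderOf u ∣ orderOf v ∧ orderOf u ≠ orderOf v := by
  constructor
  · intro hlt
    refine ⟨orderOf_dvd_of_mem_zpowers (hlt.le (mem_zpowers u)), fun he => ?_⟩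
    exact hlt.ne (zpowers_eq_of_orderOf_eq hu hv he)
  · intro ⟨hdvd, hne⟩
    refine lt_of_le_of_ne (zpowers_le_of_orderOf_dvd hu hv hdvd) (fun he => hne ?_)
    exact orderOf_eq_of_zpowers_eq he

lemma exists_orderOf_eq_of_dvd [Fintype G] {x : G} {t : ℕ} (ht : t ∣ orderOf x) :
    ∃ u ∈ zpowers x, orderOf u = t := by
  refine ⟨x ^ (orderOf x / t), Subgroup.pow_mem _ (mem_zpowers x) _, ?_⟩
  rw [orderOf_pow, Nat.gcd_eq_right (Nat.div_dvd_of_dvd ht),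
    Nat.div_div_self ht (orderOf_pos x).ne']

lemma extract_pow {a b : ℕ} (ha : a ≠ 0) (hb : b ≠ 0) (h : ¬ a ∣ b) :
    ∃ p, p.Prime ∧ p ^ a.factorization p ∣ a ∧ ¬ p ^ a.factorization p ∣ b := by
  have h1 : ¬ a.factorization ≤ b.factorization := fun hle =>
    h ((Nat.factorization_le_iff_dvd ha hb).mp hle)
  rw [Finsupp.le_def] at h1; push_neg at h1
  obtain ⟨p, hp⟩ := h1
  have hppos : 0 < a.factorization p := lt_of_le_of_lt (Nat.zero_le _) hp
  have hprime : p.Prime := by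
    by_contra hnp
    rw [Nat.factorization_eq_zero_of_not_prime a hnp] at hppos; omega
  exact ⟨p, hprime, Nat.ordProj_dvd a p, fun hdvd => by
    have := (Nat.Prime.pow_dvd_iff_le_factorization hprime hb).mp hdvd; omega⟩

lemma nt_prime_of_key {m k e : ℕ} (hk : k ∣ m) (he : e ∣ m) (hk1 : 1 < k) (he1 : 1 < e)
    (hne : k ≠ e)
    (key : ∀ t, t ∣ m →
      (((k ∣ t ∧ k ≠ t) ∨ (t ∣ k ∧ t ≠ k)) ↔ ((e ∣ t ∧ e ≠ t) ∨ (t ∣ e ∧ t ≠ e)))) :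
    k.Prime := by
  have hk0 : k ≠ 0 := by omega
  have he0 : e ≠ 0 := by omega
  have hRfalse : ¬ ((e ∣ k ∧ e ≠ k) ∨ (k ∣ e ∧ k ≠ e)) := by
    intro hr
    have := (key k hk).mpr hr
    simp at this
  have hek : ¬ e ∣ k := fun h => hRfalse (Or.inl ⟨h, Ne.symm hne⟩)
  have hke : ¬ k ∣ e := fun h => hRfalse (Or.inr ⟨h, hne⟩)
  obtain ⟨p, hp, hpk, hpe⟩ := extract_pow hk0 he0 hke
  set a := k.factorization p with ha
  have ha1 : 1 ≤ a := by
    by_contra h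
    exact hpe (by simpa [show a = 0 by omega] using (one_dvd e))
  have hkpa : k = p ^ a := by
    by_contra hne2
    have hLHS : ((k ∣ p^a ∧ k ≠ p^a) ∨ (p^a ∣ k ∧ p^a ≠ k)) :=
      Or.inr ⟨hpk, fun h => hne2 h.symm⟩
    rcases (key (p^a) (hpk.trans hk)).mp hLHS with ⟨hek', _⟩ | ⟨hpae, _⟩
    · exact hek (hek'.trans hpk)
    · exact hpe hpae
  rcases Nat.lt_or_ge a 2 with h2 | h2
  · have haa : a = 1 := by omega
    rw [hkpa, haa, pow_one]; exact hp
  · exfalso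
    have htk : p ^ (a-1) ∣ k := by rw [hkpa]; exact pow_dvd_pow p (by omega)
    have htne : p ^ (a-1) ≠ k := by
      rw [hkpa]; intro h
      have := Nat.pow_right_injective hp.two_le h; omega
    have hRHS := (key (p^(a-1)) (htk.trans hk)).mp (Or.inr ⟨htk, htne⟩)
    have hpe' : p ^ (a-1) ∣ e := by
      rcases hRHS with ⟨he', _⟩ | ⟨h', _⟩
      · exact absurd (he'.trans htk) hek
      · exact h'
    obtain ⟨q, hq, hqe, hqk⟩ := extract_pow he0 hk0 hek
    set b := e.factorization q with hb
    have hb1 : 1 ≤ b := by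
      by_contra h
      exact hqk (by simpa [show b = 0 by omega] using (one_dvd k))
    have hpq : p ≠ q := by
      intro h; subst h
      have hba : ¬ (b ≤ a) := fun hba => hqk (by rw [hkpa]; exact pow_dvd_pow p hba)
      have : k ∣ e := by
        rw [hkpa]; exact (pow_dvd_pow p (by omega : a ≤ b)).trans hqe
      exact hke this
    have hqbe : q ^ b = e := by
      by_contra hne3
      rcases (key (q^b) (hqe.trans he)).mpr (Or.inr ⟨hqe, hne3⟩) with ⟨hk', _⟩ | ⟨h', _⟩
      · have hpk' : p ∣ q ^ b := by
          refine dvd_trans ?_ hk'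
          rw [hkpa]; exact dvd_pow_self p (by omega)
        exact hpq ((Nat.prime_dvd_prime_iff_eq hp hq).mp (hp.dvd_of_dvd_pow hpk'))
      · exact hqk h'
    have hpq' : p ∣ q ^ b := by
      rw [hqbe]; exact (dvd_pow_self p (by omega : a - 1 ≠ 0)).trans hpe'
    exact hpq ((Nat.prime_dvd_prime_iff_eq hp hq).mp (hp.dvd_of_dvd_pow hpq'))

lemma sum_pred_lt_two_mul_prod_pred {E : Finset ℕ} (hE : ∀ p ∈ E, Nat.Prime p)
    (hcard : 2 ≤ E.card) : (∑ p ∈ E, (p-1)) < 2 * ∏ p ∈ E, (p-1) := by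
  classical
  induction E using Finset.induction_on_max with
  | empty => simp at hcard
  | insert a s ha ih =>
    have has : a ∉ s := fun h => lt_irrefl a (ha a h)
    have haprime : a.Prime := hE a (Finset.mem_insert_self a s)
    have hsprime : ∀ p ∈ s, Nat.Prime p := fun p hp => hE p (Finset.mem_insert_of_mem hp)
    rw [Finset.sum_insert has, Finset.prod_insert has]
    rcases Nat.lt_or_ge s.card 2 with hs2 | hs2
    · have hs1 : s.card = 1 := by
        have := Finset.card_insert_of_notMem has
        omega
      obtain ⟨p, hps⟩ := Finset.card_eq_one.mp hs1
      subst hps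
      simp only [Finset.sum_singleton, Finset.prod_singleton]
      have hpp : p.Prime := hsprime p (Finset.mem_singleton_self p)
      have hap : p < a := ha p (Finset.mem_singleton_self p)
      have h2p : 2 ≤ p := hpp.two_le
      have h3a : 3 ≤ a := by omega
      have h1 : (a-1) ≤ (a-1)*(p-1) := Nat.le_mul_of_pos_right _ (by omega)
      have h2 : 2*(p-1) ≤ (a-1)*(p-1) := Nat.mul_le_mul_right _ (by omega)
      omega
    · have hlt := ih hsprime hs2
      have hprod1 : 1 ≤ ∏ p ∈ s, (p-1) := by
        apply Finset.one_le_prod'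
        intro p hp
        have := (hsprime p hp).two_le; omega
      obtain ⟨p, hps⟩ := Finset.card_pos.mp (by omega : 0 < s.card)
      have h3a : 3 ≤ a := by
        have := (hsprime p hps).two_le
        have := ha p hps
        omega
      set A := a - 1 with hA
      have hA2 : 2 ≤ A := by omega
      set P := ∏ p ∈ s, (p-1) with hP
      have h1 : A ≤ A*P := Nat.le_mul_of_pos_right _ (by omega)
      have h2 : 2*P ≤ A*P := Nat.mul_le_mul_right _ (by omega)
      omega

lemma totient_prod_primes {E : Finset ℕ} (hE : ∀ p ∈ E, Nat.Prime p) :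
    Nat.totient (∏ p ∈ E, p) = ∏ p ∈ E, (p-1) := by
  classical
  induction E using Finset.induction with
  | empty => simp
  | insert _ _ has =>
    rename_i a s ih
    have hap : a.Prime := hE a (Finset.mem_insert_self a s)
    have hsprime : ∀ p ∈ s, Nat.Prime p := fun p hp => hE p (Finset.mem_insert_of_mem hp)
    rw [Finset.prod_insert has, Finset.prod_insert has,
      Nat.totient_mul, ih hsprime, Nat.totient_prime hap]
    exact Nat.Coprime.prod_right fun p hp =>
      (Nat.coprime_primes hap (hsprime p hp)).mpr (fun h => has (h ▸ hp))

lemma simEq_of_zpowers_eq {a b : G} (h : zpowers a = zpowers b) : simEq G a b := by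
  intro z
  unfold rpAdj
  rw [h]

lemma rpAdj_iff_of_mem [Fintype G] {x u v : G} (hu : u ∈ zpowers x) (hv : v ∈ zpowers x) :
    rpAdj G u v ↔ ((orderOf u ∣ orderOf v ∧ orderOf u ≠ orderOf v) ∨
      (orderOf v ∣ orderOf u ∧ orderOf v ≠ orderOf u)) := by
  unfold rpAdj
  rw [zpowers_lt_iff hu hv, zpowers_lt_iff hv hu]

lemma card_genCls [Fintype G] (g : G) : (genCls G g).ncard = Nat.totient (orderOf g) := by
  classical
  haveI := zpowersIsCyclic g
  have hcard : Fintype.card (zpowers g) = orderOf g := by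
    rw [← Nat.card_eq_fintype_card, Nat.card_zpowers]
  have htot := IsCyclic.card_orderOf_eq_totient (α := ↥(zpowers g)) (d := orderOf g)
      (by rw [hcard])
  rw [Set.ncard_eq_toFinset_card _ (Set.toFinite _), ← htot]
  have hmem : ∀ a ∈ (Set.toFinite (genCls G g)).toFinset, zpowers a = zpowers g := by
    intro a ha
    simpa [genCls] using (Set.Finite.mem_toFinset _).mp ha
  refine Finset.card_bij (fun a ha => ⟨a, (hmem a ha) ▸ mem_zpowers a⟩) ?_ ?_ ?_
  · intro a ha
    simp only [Finset.mem_filter, Finset.mem_univ, true_and]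
    rw [Subgroup.orderOf_mk]
    exact orderOf_eq_of_zpowers_eq (hmem a ha)
  · intro a ha b hb hab
    exact congrArg Subtype.val hab
  · intro b hb
    simp only [Finset.mem_filter, Finset.mem_univ, true_and] at hb
    have hbo : orderOf (b : G) = orderOf g := by rw [Subgroup.orderOf_coe, hb]
    have hbz : zpowers (b : G) = zpowers g :=
      zpowers_eq_of_orderOf_eq b.2 (mem_zpowers g) hbo
    refine ⟨(b : G), ?_, rfl⟩
    rw [Set.Finite.mem_toFinset]
    exact hbz

end Aux

/-- for non-identity `x, y` with `⟨y⟩ ⊊ ⟨x⟩`, if `x̂` is of Type II then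
`|ŷ| < |x̂|`. -/
theorem typeII_card_lt {G : Type*} [Group G] [Fintype G] (x y : G)
    (hx : x ≠ 1) (hy : y ≠ 1) (hsub : zpowers y < zpowers x) (hTx : TypeII G x) :
    (hatCls G y).ncard < (hatCls G x).ncard := by
  classical
  set m := orderOf x with hm
  have hm0 : 0 < m := orderOf_pos x
  unfold TypeII at hTx
  obtain ⟨hx12, hall⟩ := hTx
  have hmax : ∀ w : G, zpowers x ≤ zpowers w → zpowers x = zpowers w :=
    (hall x (fun z => Iff.rfl)).1
  have hhat : ∀ w ∈ hatCls G y, zpowers w < zpowers x := by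
    intro w hw
    have hw' : simEq G w y := hw
    have h1 : rpAdj G w x := (hw' x).mpr (Or.inl hsub)
    rcases h1 with h | h
    · exact h
    · exact absurd (hmax w h.le) h.ne
  have hne1 : ∀ w ∈ hatCls G y, w ≠ 1 := by
    intro w hw h1
    subst h1
    have hw' : simEq G 1 y := hw
    have h3 : rpAdj G 1 y := Or.inl (by
      rw [Subgroup.zpowers_one_eq_bot]
      exact bot_lt_iff_ne_bot.mpr (fun hb => hy (Subgroup.zpowers_eq_bot.mp hb)))
    rcases (hw' y).mp h3 with h | h <;> exact lt_irrefl _ h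
  have hmemx : ∀ w ∈ hatCls G y, w ∈ zpowers x := fun w hw => (hhat w hw).le (mem_zpowers w)
  have hdvd : ∀ w ∈ hatCls G y, orderOf w ∣ m :=
    fun w hw => orderOf_dvd_of_mem_zpowers (hmemx w hw)
  have hnem : ∀ w ∈ hatCls G y, orderOf w ≠ m := by
    intro w hw h
    exact (hhat w hw).ne (zpowers_eq_of_orderOf_eq (hmemx w hw) (mem_zpowers x) h)
  have hgt1 : ∀ w ∈ hatCls G y, 1 < orderOf w := by
    intro w hw
    have h0 : 0 < orderOf w := orderOf_pos w
    have h1 : orderOf w ≠ 1 := fun h => hne1 w hw (orderOf_eq_one_iff.mp h)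
    omega
  have hkey : ∀ w ∈ hatCls G y, ∀ w' ∈ hatCls G y, ∀ t, t ∣ m →
      (((orderOf w ∣ t ∧ orderOf w ≠ t) ∨ (t ∣ orderOf w ∧ t ≠ orderOf w)) ↔
       ((orderOf w' ∣ t ∧ orderOf w' ≠ t) ∨ (t ∣ orderOf w' ∧ t ≠ orderOf w'))) := by
    intro w hw w' hw' t ht
    obtain ⟨u, hu, hut⟩ := exists_orderOf_eq_of_dvd (x := x) ht
    have hw1 : simEq G w y := hw
    have hw2 : simEq G w' y := hw'
    have hsim : rpAdj G w u ↔ rpAdj G w' u := (hw1 u).trans (hw2 u).symm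
    rw [rpAdj_iff_of_mem (hmemx w hw) hu, rpAdj_iff_of_mem (hmemx w' hw') hu, hut] at hsim
    exact hsim
  have hprime : ∀ w ∈ hatCls G y, ∀ w' ∈ hatCls G y,
      orderOf w ≠ orderOf w' → (orderOf w).Prime := by
    intro w hw w' hw' hnep
    exact nt_prime_of_key (hdvd w hw) (hdvd w' hw') (hgt1 w hw) (hgt1 w' hw') hnep
      (hkey w hw w' hw')
  -- counting on the y side
  set Fy := (Set.toFinite (hatCls G y)).toFinset with hFydef
  set O := Fy.image orderOf with hOdef
  have hmemFy : ∀ w, w ∈ Fy ↔ w ∈ hatCls G y := fun w => Set.Finite.mem_toFinset _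
  have hyFy : y ∈ Fy := (hmemFy y).mpr (fun z => Iff.rfl)
  have hcards : Fy.card = ∑ e ∈ O, (Fy.filter (fun w => orderOf w = e)).card :=
    Finset.card_eq_sum_card_image orderOf Fy
  have hfilter : ∀ e ∈ O, (Fy.filter (fun w => orderOf w = e)).card ≤ Nat.totient e := by
    intro e he
    obtain ⟨w0, hw0, hw0e⟩ := Finset.mem_image.mp he
    have hw0' := (hmemFy w0).mp hw0
    have hsubset : Fy.filter (fun w => orderOf w = e) ⊆
        (Set.toFinite (genCls G w0)).toFinset := by
      intro w hwmem
      obtain ⟨hwF, hwe⟩ := Finset.mem_filter.mp hwmem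
      have hw' := (hmemFy w).mp hwF
      rw [Set.Finite.mem_toFinset]
      exact zpowers_eq_of_orderOf_eq (hmemx w hw') (hmemx w0 hw0') (by rw [hwe, hw0e])
    have hc := Finset.card_le_card hsubset
    rwa [← Set.ncard_eq_toFinset_card _ (Set.toFinite _), card_genCls, hw0e] at hc
  have hFyletot : Fy.card ≤ ∑ e ∈ O, Nat.totient e := by
    rw [hcards]; exact Finset.sum_le_sum hfilter
  have hOdvd : ∀ e ∈ O, e ∣ m ∧ e ≠ m := by
    intro e he
    obtain ⟨w0, hw0, hw0e⟩ := Finset.mem_image.mp he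
    have hw0' := (hmemFy w0).mp hw0
    exact ⟨hw0e ▸ hdvd w0 hw0', hw0e ▸ hnem w0 hw0'⟩
  -- counting on the x side
  obtain ⟨x₁, x₂, h1, h2, h12⟩ := hx12
  have ho1 : orderOf x₁ = m := (hall x₁ h1).2
  have ho2 : orderOf x₂ = m := (hall x₂ h2).2
  set Fx := (Set.toFinite (hatCls G x)).toFinset with hFxdef
  have hgensub : (Set.toFinite (genCls G x₁)).toFinset ∪
      (Set.toFinite (genCls G x₂)).toFinset ⊆ Fx := by
    intro h hmem
    rw [Set.Finite.mem_toFinset]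
    rcases Finset.mem_union.mp hmem with hh | hh <;> rw [Set.Finite.mem_toFinset] at hh
    · exact fun z => ((simEq_of_zpowers_eq hh) z).trans (h1 z)
    · exact fun z => ((simEq_of_zpowers_eq hh) z).trans (h2 z)
  have hdisj : Disjoint ((Set.toFinite (genCls G x₁)).toFinset)
      ((Set.toFinite (genCls G x₂)).toFinset) := by
    rw [Finset.disjoint_left]
    intro a ha hb
    rw [Set.Finite.mem_toFinset] at ha hb
    have ha' : zpowers a = zpowers x₁ := ha
    have hb' : zpowers a = zpowers x₂ := hb
    exact h12 (ha' ▸ hb')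
  have hcard1 : ((Set.toFinite (genCls G x₁)).toFinset).card = Nat.totient m := by
    rw [← Set.ncard_eq_toFinset_card _ (Set.toFinite _), card_genCls, ho1]
  have hcard2 : ((Set.toFinite (genCls G x₂)).toFinset).card = Nat.totient m := by
    rw [← Set.ncard_eq_toFinset_card _ (Set.toFinite _), card_genCls, ho2]
  have hFxge : 2 * Nat.totient m ≤ Fx.card := by
    have hc := Finset.card_le_card hgensub
    rwa [Finset.card_union_of_disjoint hdisj, hcard1, hcard2, ← two_mul] at hc
  -- conclude
  have hgoal1 : (hatCls G y).ncard = Fy.card := by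
    rw [hFydef]; exact Set.ncard_eq_toFinset_card _ _
  have hgoal2 : (hatCls G x).ncard = Fx.card := by
    rw [hFxdef]; exact Set.ncard_eq_toFinset_card _ _
  rw [hgoal1, hgoal2]
  have htotpos : 0 < Nat.totient m := Nat.totient_pos.mpr hm0
  rcases Nat.lt_or_ge O.card 2 with hO2 | hO2
  · have hOne : O.Nonempty := ⟨orderOf y, Finset.mem_image_of_mem orderOf hyFy⟩
    have hO1 : O.card = 1 := by
      have := Finset.card_pos.mpr hOne; omega
    obtain ⟨e0, he0⟩ := Finset.card_eq_one.mp hO1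
    have he0O : e0 ∈ O := he0 ▸ Finset.mem_singleton_self e0
    have hsum : ∑ e ∈ O, Nat.totient e = Nat.totient e0 := by
      rw [he0, Finset.sum_singleton]
    have hle : Nat.totient e0 ≤ Nat.totient m :=
      Nat.le_of_dvd htotpos (Nat.totient_dvd_of_dvd (hOdvd e0 he0O).1)
    omega
  · have hOprime : ∀ e ∈ O, e.Prime := by
      intro e he
      obtain ⟨e', he', hee'⟩ := Finset.exists_mem_ne (s := O) (by omega) e
      obtain ⟨w0, hw0, hw0e⟩ := Finset.mem_image.mp he
      obtain ⟨w1, hw1, hw1e⟩ := Finset.mem_image.mp he'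
      refine hw0e ▸ hprime w0 ((hmemFy w0).mp hw0) w1 ((hmemFy w1).mp hw1) ?_
      rw [hw0e, hw1e]
      exact Ne.symm hee'
    have hstep1 : ∑ e ∈ O, Nat.totient e = ∑ e ∈ O, (e-1) :=
      Finset.sum_congr rfl (fun e he => Nat.totient_prime (hOprime e he))
    have hstep2 : ∑ e ∈ O, (e-1) < 2 * ∏ e ∈ O, (e-1) :=
      sum_pred_lt_two_mul_prod_pred hOprime hO2
    have hprodd : (∏ e ∈ O, e) ∣ m :=
      Finset.prod_primes_dvd m (fun p hp => (hOprime p hp).prime)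
        (fun p hp => (hOdvd p hp).1)
    have hstep3 : ∏ e ∈ O, (e-1) ≤ Nat.totient m := by
      rw [← totient_prod_primes hOprime]
      exact Nat.le_of_dvd htotpos (Nat.totient_dvd_of_dvd hprodd)
    omega
end

section
/- Let G be a finite group that is not isomorphic to the cyclic group Z_{2^m} for any m ≥ 1 and not isomorphic to the generalized quaternion group Q_{2^α} of order 2^α for any α ≥ 3. Then every automorphism of the reduced power graph RP(G) fixes the identity element e of G. -/
open Subgroup Set

variable (G : Type*) [Group G]

section Aux

/-- A finite 2-group (given elementwise) that is commutative and has at most one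
involution is cyclic. -/
theorem myIsCyclic {H : Type*} [Group H] [Fintype H]
    (hcomm : ∀ u v : H, u * v = v * u)
    (h2 : ∀ y : H, ∃ k : ℕ, orderOf y = 2 ^ k)
    (hu : ∀ s t : H, s ^ 2 = 1 → t ^ 2 = 1 → s ≠ 1 → t ≠ 1 → s = t) :
    IsCyclic H := by
  classical
  have key : ∀ k : ℕ, (Finset.univ.filter fun y : H => y ^ (2 ^ k) = 1).card ≤ 2 ^ k := by
    intro k
    induction k with
    | zero =>
      have : (Finset.univ.filter fun y : H => y ^ (2 ^ 0) = 1) ⊆ {1} := by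
        intro y hy
        simp only [Finset.mem_filter, pow_one, pow_zero] at hy
        simp [hy.2]
      simpa using Finset.card_le_card this
    | succ k ih =>
      set s := Finset.univ.filter fun y : H => y ^ (2 ^ (k + 1)) = 1 with hs
      have himg : s.image (fun y => y * y) ⊆ Finset.univ.filter fun y : H => y ^ (2 ^ k) = 1 := by
        intro b hb
        simp only [Finset.mem_image, hs, Finset.mem_filter, Finset.mem_univ, true_and] at hb ⊢
        obtain ⟨y, hy, rfl⟩ := hb
        have : (y * y) ^ 2 ^ k = y ^ 2 ^ (k + 1) := by
          rw [← sq, ← pow_mul, pow_succ, mul_comm (2 ^ k) 2, pow_mul, sq]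
        rw [this, hy]
      have hfib : ∀ b ∈ s.image (fun y => y * y),
          (s.filter fun y => y * y = b).card ≤ 2 := by
        intro b _
        by_contra hgt
        push_neg at hgt
        obtain ⟨u, v, w, hus, hvs, hws, huv, huw, hvw⟩ := Finset.two_lt_card_iff.mp hgt
        simp only [Finset.mem_filter] at hus hvs hws
        have sq1 : ∀ p q : H, p * p = b → q * q = b → (p * q⁻¹) ^ 2 = 1 := by
          intro p q hp hq
          have : p * q⁻¹ * (p * q⁻¹) = (p * p) * (q * q)⁻¹ := by
            rw [mul_inv_rev]
            calc p * q⁻¹ * (p * q⁻¹) = p * (q⁻¹ * p) * q⁻¹ := by group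
              _ = p * (p * q⁻¹) * q⁻¹ := by rw [hcomm q⁻¹ p]
              _ = p * p * (q⁻¹ * q⁻¹) := by group
          rw [sq, this, hp, hq, mul_inv_cancel]
        have h1 : (u * v⁻¹) ^ 2 = 1 := sq1 u v hus.2 hvs.2
        have h2' : (u * w⁻¹) ^ 2 = 1 := sq1 u w hus.2 hws.2
        have hne1 : u * v⁻¹ ≠ 1 := by
          intro h; exact huv (by rwa [mul_inv_eq_one] at h)
        have hne2 : u * w⁻¹ ≠ 1 := by
          intro h; exact huw (by rwa [mul_inv_eq_one] at h)
        have heq := hu _ _ h1 h2' hne1 hne2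
        have : v = w := inv_injective (mul_left_cancel heq)
        exact hvw this
      calc s.card ≤ 2 * (s.image (fun y => y * y)).card :=
            Finset.card_le_mul_card_image s 2 hfib
        _ ≤ 2 * 2 ^ k := by
            have := Finset.card_le_card himg
            omega
        _ = 2 ^ (k + 1) := by ring
  apply isCyclic_of_card_pow_eq_one_le
  intro n hn
  set k := n.factorization 2 with hk
  have hdvd : 2 ^ k ∣ n := Nat.ordProj_dvd n 2
  have hle : 2 ^ k ≤ n := Nat.le_of_dvd hn hdvd
  have hsub : (Finset.univ.filter fun y : H => y ^ n = 1)
      ⊆ Finset.univ.filter fun y : H => y ^ (2 ^ k) = 1 := by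
    intro y hy
    simp only [Finset.mem_filter, Finset.mem_univ, true_and] at hy ⊢
    obtain ⟨j, hj⟩ := h2 y
    have hdj : orderOf y ∣ n := orderOf_dvd_iff_pow_eq_one.mpr hy
    rw [hj] at hdj
    have : j ≤ k := (Nat.Prime.pow_dvd_iff_le_factorization Nat.prime_two (by omega)).mp hdj
    have : orderOf y ∣ 2 ^ k := by
      rw [hj]; exact pow_dvd_pow 2 this
    exact orderOf_dvd_iff_pow_eq_one.mp this
  calc (Finset.univ.filter fun y : H => y ^ n = 1).card
      ≤ (Finset.univ.filter fun y : H => y ^ (2 ^ k) = 1).card := Finset.card_le_card hsub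
    _ ≤ 2 ^ k := key k
    _ ≤ n := hle

end Aux
open Subgroup Set

theorem dvd_of_dvd_mul_odd {m : ℕ} {A s : ℤ} (h : (2:ℤ)^m ∣ A * (2*s+1)) : (2:ℤ)^m ∣ A :=
  (IsCoprime.pow_left (⟨-s, 1, by ring⟩ : IsCoprime (2:ℤ) (2*s+1))).dvd_of_dvd_mul_right h

theorem dvd_cancel_two {m : ℕ} {B : ℤ} (hm : 1 ≤ m) (h : (2:ℤ)^m ∣ 2*B) :
    (2:ℤ)^(m-1) ∣ B := by
  obtain ⟨r, hr⟩ := h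
  refine ⟨r, ?_⟩
  have h2 : (2:ℤ)^m = 2 * 2^(m-1) := by
    rw [← pow_succ']; congr 1; omega
  rw [h2] at hr
  have : (2:ℤ) * B = 2 * (2^(m-1) * r) := by linear_combination hr
  exact mul_left_cancel₀ two_ne_zero this

theorem localAnalysis {G : Type*} [Group G] (a x g : G) (m : ℕ) (hm : 2 ≤ m)
    (hx : orderOf x = 2 ^ m)
    (ha : a = x ^ (2 ^ (m - 1)))
    (hu : ∀ t : G, t ^ 2 = 1 → t = 1 ∨ t = a)
    (hCA : ∀ c : G, c * x = x * c → c ∈ zpowers x)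
    (hgA : g ∉ zpowers x) (hg2 : g ^ 2 ∈ zpowers x)
    (hconj : g⁻¹ * x * g ∈ zpowers x) :
    g⁻¹ * x * g = x⁻¹ ∧ g ^ 2 = a := by
  obtain ⟨k, hk⟩ := Subgroup.mem_zpowers_iff.mp hconj
  obtain ⟨c, hc⟩ := Subgroup.mem_zpowers_iff.mp hg2
  have hPord : ((orderOf x : ℤ)) = 2 ^ m := by rw [hx]; push_cast; ring
  have hdvdpow : ∀ j : ℤ, (2:ℤ)^m ∣ j → x ^ j = 1 := by
    intro j hj
    rw [← orderOf_dvd_iff_zpow_eq_one, hPord]; exact hj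
  have hpowdvd : ∀ j : ℤ, x ^ j = 1 → (2:ℤ)^m ∣ j := by
    intro j hj
    rw [← hPord]; exact orderOf_dvd_iff_zpow_eq_one.mpr hj
  have ham : x ^ ((2:ℤ)^(m-1)) = a := by
    rw [ha]
    rw [show ((2:ℤ)^(m-1)) = ((2^(m-1) : ℕ) : ℤ) by push_cast; ring, zpow_natCast]
  have ha2 : a ^ 2 = 1 := by
    rw [← ham, ← zpow_natCast, ← zpow_mul]
    apply hdvdpow
    rw [show ((2:ℤ)^(m-1) * (2:ℕ) : ℤ) = 2^m by push_cast; rw [← pow_succ]; congr 1; omega]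
  have hane : a ≠ 1 := by
    rw [ha]
    intro h
    have := orderOf_dvd_iff_pow_eq_one.mpr h
    rw [hx] at this
    have : (2:ℕ)^m ≤ 2^(m-1) := Nat.le_of_dvd (by positivity) this
    have h1 : (2:ℕ)^(m-1) < 2^m := Nat.pow_lt_pow_right one_lt_two (by omega)
    omega
  have haA : a ∈ zpowers x := by rw [ha]; exact pow_mem (mem_zpowers x) _
  have hconjpow : ∀ j : ℤ, g⁻¹ * x ^ j * g = x ^ (k * j) := by
    intro j
    have h1 : g⁻¹ * x ^ j * g = (g⁻¹ * x * g⁻¹⁻¹) ^ j := by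
      rw [conj_zpow]; group
    rw [h1, inv_inv, ← hk, ← zpow_mul]
  have hcomm : x * g ^ 2 = g ^ 2 * x := by
    rw [← hc]; exact ((Commute.refl x).zpow_right c).eq
  have hdvd1 : (2:ℤ)^m ∣ k * k - 1 := by
    have e1 : g⁻¹ * (g⁻¹ * x * g) * g = x ^ (k * k) := by
      rw [← hk, hconjpow k]
    have e2 : g⁻¹ * (g⁻¹ * x * g) * g = x := by
      have h3 : g⁻¹ * (g⁻¹ * x * g) * g = (g^2)⁻¹ * (x * g^2) := by
        rw [pow_two]; group
      rw [h3, hcomm]; group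
    have h4 : x ^ (k * k) = x ^ (1:ℤ) := by rw [← e1, e2, zpow_one]
    apply hpowdvd
    rw [zpow_sub, h4, zpow_one, mul_inv_cancel]
  have hkodd : k % 2 = 1 := by
    rcases Int.even_or_odd k with he | ho
    · exfalso
      obtain ⟨l, hl⟩ := he
      have h4 : (2:ℤ) ∣ k * k - 1 := dvd_trans (dvd_pow_self 2 (by omega : m ≠ 0)) hdvd1
      obtain ⟨r, hr⟩ := h4
      have hh : 2*(l*l) + 2*(l*l) - 1 = 2*r := by rw [hl] at hr; linear_combination hr
      omega
    · obtain ⟨l, hl⟩ := ho; omega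
  have hdvd2 : (2:ℤ)^m ∣ c * (k - 1) := by
    have e1 : g⁻¹ * x ^ c * g = x ^ (k * c) := hconjpow c
    have e2 : g⁻¹ * x ^ c * g = x ^ c := by rw [hc]; group
    have h4 : x ^ (k*c) = x ^ c := by rw [← e1, e2]
    have h5 := hpowdvd _ (by rw [zpow_sub, h4, mul_inv_cancel] : x ^ (k*c - c) = 1)
    have h6 : c * (k-1) = k*c - c := by ring
    rw [h6]; exact h5
  have hsq : ∀ t : ℤ, (g * x ^ t) ^ 2 = x ^ (c + k * t + t) := by
    intro t
    have h1 : (g * x ^ t) ^ 2 = g ^ 2 * (g⁻¹ * x ^ t * g) * x ^ t := by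
      rw [pow_two, pow_two]; group
    rw [h1, hconjpow t, ← hc, ← zpow_add, ← zpow_add]
  have hinv : ∀ t : ℤ, (g * x ^ t) ^ 2 ≠ 1 := by
    intro t h
    rcases hu _ h with h1 | h1
    · exact hgA (by
        have h2 : g = (x ^ t)⁻¹ := by
          rw [← one_mul (x ^ t)⁻¹, ← h1]; group
        rw [h2]
        exact inv_mem (zpow_mem (mem_zpowers x) t))
    · exact hgA (by
        have h2 : g = a * (x ^ t)⁻¹ := by
          rw [← h1]; group
        rw [h2]
        exact mul_mem haA (inv_mem (zpow_mem (mem_zpowers x) t)))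
  have hg2ne : g ^ 2 ≠ 1 := by
    have h0 := hinv 0
    rw [zpow_zero, mul_one] at h0
    exact h0
  have hk4 : k % 4 = 1 ∨ k % 4 = 3 := by omega
  have hfact : k * k - 1 = (k - 1) * (k + 1) := by ring
  have hpowsucc : (2:ℤ)^m = 2^(m-1)*2 := by rw [← pow_succ]; congr 1; omega
  rcases hk4 with hA | hB
  · -- k ≡ 1 mod 4 : contradiction
    exfalso
    obtain ⟨q, hq⟩ : ∃ q, k = 4*q+1 := ⟨(k-1)/4, by omega⟩
    have hsplit : (2:ℤ)^(m-1) ∣ k - 1 := by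
      have h1 : (2:ℤ)^m ∣ 2 * ((k-1) * (2*q+1)) := by
        rw [hfact] at hdvd1
        have h2 : (k-1)*(k+1) = 2*((k-1)*(2*q+1)) := by rw [hq]; ring
        rwa [h2] at hdvd1
      exact dvd_of_dvd_mul_odd (dvd_cancel_two (by omega) h1)
    by_cases hfull : (2:ℤ)^m ∣ k - 1
    · have hxk : x ^ k = x := by
        have h1 : x ^ (k - 1) = 1 := hdvdpow _ hfull
        have h2 : x ^ k = x ^ (k-1) * x ^ (1:ℤ) := by rw [← zpow_add]; ring_nf
        rw [h2, h1, one_mul, zpow_one]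
      have h2 : g⁻¹ * x * g = x := by rw [← hk]; exact hxk
      have hgx : g * x = x * g := by
        have h3 : g * (g⁻¹ * x * g) = x * g := by group
        rw [h2] at h3
        exact h3
      exact hgA (hCA g hgx)
    · obtain ⟨d, hd⟩ := hsplit
      have hdodd : d % 2 = 1 := by
        rcases Int.even_or_odd d with he | ho
        · exfalso
          obtain ⟨l, hl⟩ := he
          exact hfull ⟨l, by rw [hd, hl, hpowsucc]; ring⟩
        · obtain ⟨l, hl⟩ := ho; omega
      have hm3 : 3 ≤ m := by
        by_contra hlt
        have hm2 : m = 2 := by omega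
        rw [hm2] at hd
        norm_num at hd
        omega
      have hceven : (2:ℤ) ∣ c := by
        have h1 : (2:ℤ)^m ∣ (2:ℤ)^(m-1) * (c * d) := by
          have h2 : (2:ℤ)^(m-1) * (c*d) = c * (k-1) := by rw [hd]; ring
          rwa [h2]
        have h2 : (2:ℤ) ∣ c * d := by
          obtain ⟨r, hr⟩ := h1
          refine ⟨r, ?_⟩
          rw [hpowsucc] at hr
          have hne : (2:ℤ)^(m-1) ≠ 0 := by positivity
          have h3 : (2:ℤ)^(m-1) * (c*d) = 2^(m-1) * (2*r) := by linear_combination hr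
          have := mul_left_cancel₀ hne h3
          linarith [this]
        have h2' : Even (c * d) := by obtain ⟨r, hr⟩ := h2; exact ⟨r, by omega⟩
        rcases Int.even_mul.mp h2' with h | h
        · obtain ⟨l, hl⟩ := h; exact ⟨l, by omega⟩
        · exfalso; obtain ⟨l, hl⟩ := h; omega
      obtain ⟨c', hc'⟩ := hceven
      have hw : k + 1 = 2 * ((2:ℤ)^(m-2)*d + 1) := by
        rw [show k = 2^(m-1)*d + 1 by omega]
        rw [show (2:ℤ)^(m-1) = 2 * 2^(m-2) by rw [← pow_succ']; congr 1; omega]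
        ring
      have hwodd : (2:ℤ)^(m-2)*d + 1 = 2*((2:ℤ)^(m-3)*d) + 1 := by
        rw [show (2:ℤ)^(m-2) = 2 * 2^(m-3) by rw [← pow_succ']; congr 1; omega]
        ring
      obtain ⟨u, v, huv⟩ : IsCoprime ((2:ℤ)^(m-1)) ((2:ℤ)^(m-2)*d + 1) := by
        apply IsCoprime.pow_left
        rw [hwodd]
        exact ⟨-((2:ℤ)^(m-3)*d), 1, by ring⟩
      apply hinv (-(c' * v))
      rw [hsq (-(c' * v))]
      apply hdvdpow
      refine ⟨c' * u, ?_⟩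
      have hexp : c + k * (-(c' * v)) + (-(c' * v)) = c + (k+1) * (-(c' * v)) := by ring
      rw [hexp, hw, hc', hpowsucc]
      linear_combination (-(2:ℤ)*c') * huv
  · obtain ⟨q, hq⟩ : ∃ q, k = 4*q+3 := ⟨(k-3)/4, by omega⟩
    have hsplit : (2:ℤ)^(m-1) ∣ k + 1 := by
      have h1 : (2:ℤ)^m ∣ 2 * ((k+1) * (2*q+1)) := by
        rw [hfact] at hdvd1
        have h2 : (k-1)*(k+1) = 2*((k+1)*(2*q+1)) := by rw [hq]; ring
        rwa [h2] at hdvd1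
      exact dvd_of_dvd_mul_odd (dvd_cancel_two (by omega) h1)
    by_cases hfull : (2:ℤ)^m ∣ k + 1
    · have h1 : x ^ (k + 1) = 1 := hdvdpow _ hfull
      have h2 : x ^ k * x = 1 := by
        rw [← zpow_add_one]
        exact h1
      have hxk : x ^ k = x⁻¹ := by
        have := mul_eq_one_iff_eq_inv.mp h2
        exact this
      constructor
      · rw [← hk]; exact hxk
      · have hdvdc : (2:ℤ)^(m-1) ∣ c := by
          apply dvd_cancel_two (by omega : 1 ≤ m)
          have h3 : (2:ℤ)^m ∣ c * (k+1) := Dvd.dvd.mul_left hfull c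
          have h4 : 2*c = c*(k+1) - c*(k-1) := by ring
          rw [h4]
          exact dvd_sub h3 hdvd2
        obtain ⟨e, he⟩ := hdvdc
        have hg2a : g ^ 2 = a ^ e := by
          rw [← hc, he, zpow_mul, ham]
        have horda : orderOf a = 2 := by
          haveI : Fact (Nat.Prime 2) := ⟨Nat.prime_two⟩
          exact orderOf_eq_prime ha2 hane
        have haze : a ^ e = a ^ (e % 2) := by
          conv_lhs => rw [← zpow_mod_orderOf a e]
          rw [horda]
          norm_cast
        rcases Int.even_or_odd e with hev | hod
        · exfalso
          apply hg2ne
          rw [hg2a, haze]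
          obtain ⟨l, hl⟩ := hev
          rw [show e % 2 = 0 by omega, zpow_zero]
        · rw [hg2a, haze]
          obtain ⟨l, hl⟩ := hod
          rw [show e % 2 = 1 by omega, zpow_one]
    · exfalso
      obtain ⟨d, hd⟩ := hsplit
      have hdodd : d % 2 = 1 := by
        rcases Int.even_or_odd d with he | ho
        · exfalso
          obtain ⟨l, hl⟩ := he
          exact hfull ⟨l, by rw [hd, hl, hpowsucc]; ring⟩
        · obtain ⟨l, hl⟩ := ho; omega
      have hm3 : 3 ≤ m := by
        by_contra hlt
        have hm2 : m = 2 := by omega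
        rw [hm2] at hd
        norm_num at hd
        omega
      have hkm1 : k - 1 = 2 * ((2:ℤ)^(m-2)*d - 1) := by
        rw [show k = 2^(m-1)*d - 1 by omega]
        rw [show (2:ℤ)^(m-1) = 2 * 2^(m-2) by rw [← pow_succ']; congr 1; omega]
        ring
      have hoddform : (2:ℤ)^(m-2)*d - 1 = 2*((2:ℤ)^(m-3)*d - 1) + 1 := by
        rw [show (2:ℤ)^(m-2) = 2 * 2^(m-3) by rw [← pow_succ']; congr 1; omega]
        ring
      have hdvdc : (2:ℤ)^(m-1) ∣ c := by
        have h1 : (2:ℤ)^(m-1) ∣ c * ((2:ℤ)^(m-2)*d - 1) := by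
          apply dvd_cancel_two (by omega : 1 ≤ m)
          have h2 : 2 * (c * ((2:ℤ)^(m-2)*d - 1)) = c * (k-1) := by rw [hkm1]; ring
          rw [h2]; exact hdvd2
        rw [hoddform] at h1
        exact dvd_of_dvd_mul_odd h1
      obtain ⟨e, he⟩ := hdvdc
      apply hinv e
      rw [hsq e]
      apply hdvdpow
      have h2 : c + k * e + e = c + (k+1)*e := by ring
      rw [h2, he, show k + 1 = (2:ℤ)^(m-1)*d from by omega]
      obtain ⟨f, hf⟩ : ∃ f, d + 1 = 2 * f := ⟨(d+1)/2, by omega⟩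
      refine ⟨e * f, ?_⟩
      rw [hpowsucc]
      linear_combination ((2:ℤ)^(m-1)*e) * hf

theorem classify {G : Type*} [Group G] [Fintype G] (a : G) (ha1 : a ≠ 1) (ha2 : a ^ 2 = 1)
    (key : ∀ y : G, y ≠ 1 → a ∈ zpowers y) :
    (IsCyclic G ∧ ∃ m : ℕ, 1 ≤ m ∧ Fintype.card G = 2 ^ m) ∨
      ∃ α : ℕ, 3 ≤ α ∧ Nonempty (G ≃* QuaternionGroup (2 ^ (α - 2))) := by
  classical
  haveI : Fact (Nat.Prime 2) := ⟨Nat.prime_two⟩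
  have horda : orderOf a = 2 := orderOf_eq_prime ha2 ha1
  -- unique involution
  have hu : ∀ t : G, t ^ 2 = 1 → t = 1 ∨ t = a := by
    intro t ht
    by_cases h : t = 1
    · left; exact h
    · right
      obtain ⟨j, hj⟩ := Subgroup.mem_zpowers_iff.mp (key t h)
      have hordt : orderOf t = 2 := orderOf_eq_prime ht h
      have hmod : t ^ (j % 2) = t ^ j := by
        have := zpow_mod_orderOf t j
        rwa [hordt, show ((2:ℕ):ℤ) = (2:ℤ) by norm_cast] at this
      have hj2 : j % 2 = 0 ∨ j % 2 = 1 := by omega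
      rcases hj2 with h2 | h2
      · exfalso
        apply ha1
        rw [← hj, ← hmod, h2, zpow_zero]
      · rw [← hj, ← hmod, h2, zpow_one]
  -- all orders are powers of 2
  have hord : ∀ g : G, ∃ k : ℕ, orderOf g = 2 ^ k := by
    intro g
    rcases eq_or_ne g 1 with rfl | hg
    · exact ⟨0, by simp⟩
    · have hpos : 0 < orderOf g := orderOf_pos g
      have hprime : ∀ {q : ℕ}, q.Prime → q ∣ orderOf g → q = 2 := by
        intro q hq hdvd
        by_contra hne
        obtain ⟨s, hsodd⟩ := hq.odd_of_ne_two hne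
        set h := g ^ (orderOf g / q) with hh
        have hordh : orderOf h = q := by
          rw [hh, orderOf_pow]
          rw [Nat.gcd_eq_right (Nat.div_dvd_of_dvd hdvd)]
          exact Nat.div_div_self hdvd (by omega)
        have hne1 : h ≠ 1 := by
          intro hcon
          rw [hcon, orderOf_one] at hordh
          exact hq.one_lt.ne' hordh.symm
        obtain ⟨j, hj⟩ := Subgroup.mem_zpowers_iff.mp (key h hne1)
        have hq2j : ((q:ℤ)) ∣ 2 * j := by
          have h1 : h ^ (2 * j) = 1 := by
            rw [mul_comm, zpow_mul, hj, show ((2:ℤ)) = ((2:ℕ):ℤ) by norm_cast,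
               zpow_natCast, ha2]
          have := orderOf_dvd_iff_zpow_eq_one.mpr h1
          rwa [hordh] at this
        have hcop : IsCoprime ((q:ℤ)) 2 := by
          refine ⟨1, -s, ?_⟩
          have : (q:ℤ) = 2*s+1 := by exact_mod_cast congrArg (Nat.cast : ℕ → ℤ) hsodd
          rw [this]; ring
        obtain ⟨r, hr⟩ := hcop.dvd_of_dvd_mul_left hq2j
        apply ha1
        rw [← hj, hr, zpow_mul]
        have hq1 : h ^ ((q:ℤ)) = 1 := by
          rw [show ((q:ℤ)) = ((q:ℕ):ℤ) by norm_cast, zpow_natCast, ← hordh,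
            pow_orderOf_eq_one]
        rw [hq1, one_zpow]
      exact ⟨(orderOf g).primeFactorsList.length,
        Nat.eq_prime_pow_of_unique_prime_dvd (by omega) (fun hq hd => hprime hq hd)⟩
  -- a is central
  have hcen : ∀ y : G, Commute a y := by
    intro y
    rcases eq_or_ne y 1 with rfl | hy
    · exact Commute.one_right a
    · obtain ⟨j, hj⟩ := Subgroup.mem_zpowers_iff.mp (key y hy)
      rw [← hj]
      exact (Commute.refl y).zpow_left j
  have hp2 : IsPGroup 2 G := by
    intro g
    obtain ⟨k, hk⟩ := hord g
    exact ⟨k, by rw [← hk]; exact pow_orderOf_eq_one g⟩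
  by_cases hcyc : IsCyclic G
  · left
    refine ⟨hcyc, ?_⟩
    obtain ⟨n, hn⟩ := IsPGroup.iff_card.mp hp2
    haveI : Nontrivial G := ⟨⟨a, 1, ha1⟩⟩
    have h1 : 1 < Nat.card G := Finite.one_lt_card
    refine ⟨n, ?_, ?_⟩
    · rcases Nat.eq_zero_or_pos n with rfl | h
      · rw [hn] at h1; norm_num at h1
      · omega
    · rw [← Nat.card_eq_fintype_card, hn]
  · right
    -- x of maximal order
    obtain ⟨x, -, hxmax⟩ := Finset.exists_max_image (Finset.univ : Finset G) orderOf
      ⟨1, Finset.mem_univ 1⟩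
    have hmax : ∀ y : G, orderOf y ≤ orderOf x := fun y => hxmax y (Finset.mem_univ y)
    obtain ⟨m, hm⟩ := hord x
    -- m ≥ 2
    have hm2 : 2 ≤ m := by
      by_contra hcon
      have hsq1 : ∀ y : G, y ^ 2 = 1 := by
        intro y
        apply orderOf_dvd_iff_pow_eq_one.mp
        obtain ⟨k, hk⟩ := hord y
        have h1 : orderOf y ≤ 2 := by
          refine le_trans (hmax y) ?_
          rw [hm]
          calc (2:ℕ)^m ≤ 2^1 := Nat.pow_le_pow_right (by norm_num) (by omega)
            _ = 2 := by norm_num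
        rw [hk] at h1 ⊢
        have hkle : k ≤ 1 := by
          by_contra hk2
          push_neg at hk2
          have : (2:ℕ)^2 ≤ 2^k := Nat.pow_le_pow_right (by norm_num) (by omega)
          omega
        interval_cases k
        · norm_num
        · norm_num
      have hcomm : ∀ u v : G, u * v = v * u := by
        intro u v
        have h1 : ∀ w : G, w = w⁻¹ := by
          intro w
          have := hsq1 w
          rw [pow_two] at this
          exact (mul_eq_one_iff_eq_inv.mp this)
        calc u * v = (u*v)⁻¹ := h1 (u*v)
          _ = v⁻¹ * u⁻¹ := by rw [mul_inv_rev]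
          _ = v * u := by rw [← h1 v, ← h1 u]
      exact hcyc (myIsCyclic hcomm hord (fun s t hs ht hs1 ht1 => by
        rcases hu s hs with h | h
        · exact absurd h hs1
        · rcases hu t ht with h' | h'
          · exact absurd h' ht1
          · rw [h, h']))
    -- centralizer of x is zpowers x
    have hCA : ∀ c : G, c * x = x * c → c ∈ zpowers x := by
      intro c hcx
      set H := Subgroup.closure ({x, c} : Set G) with hH
      have hcommH : ∀ u v : G, u ∈ H → v ∈ H → u * v = v * u := by
        intro u v hu' hv'
        refine Subgroup.closure_induction₂ ?_ ?_ ?_ ?_ ?_ ?_ ?_ hu' hv'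
        · rintro p q (rfl | hp) (rfl | hq)
          · rfl
          · rw [Set.mem_singleton_iff] at hq; subst hq; exact hcx.symm
          · rw [Set.mem_singleton_iff] at hp; subst hp; exact hcx
          · rw [Set.mem_singleton_iff] at hp hq; subst hp; subst hq; rfl
        · intro z _; rw [one_mul, mul_one]
        · intro z _; rw [one_mul, mul_one]
        · intro p q z _ _ _ hpz hqz
          rw [mul_assoc, hqz, ← mul_assoc, hpz, mul_assoc]
        · intro p q z _ _ _ hzp hzq
          rw [← mul_assoc, hzp, mul_assoc, hzq, ← mul_assoc]
        · intro p z _ _ hpz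
          exact (Commute.inv_left (show Commute p z from hpz)).eq
        · intro p z _ _ hpz
          exact (Commute.inv_right (show Commute p z from hpz)).eq
      haveI : Fintype H := Fintype.ofFinite _
      have hcyclicH : IsCyclic H := by
        apply myIsCyclic
        · intro u v
          exact Subtype.ext (hcommH u.1 v.1 u.2 v.2)
        · intro y
          obtain ⟨k, hk⟩ := hord (y : G)
          refine ⟨k, ?_⟩
          rw [← hk]
          exact (orderOf_injective H.subtype (Subgroup.subtype_injective H) y).symm
        · intro s t hs ht hs1 ht1
          have hsG : (s:G) ^ 2 = 1 := by
            have := congrArg (Subtype.val) hs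
            push_cast at this
            exact this
          have htG : (t:G) ^ 2 = 1 := by
            have := congrArg (Subtype.val) ht
            push_cast at this
            exact this
          have hs1G : (s:G) ≠ 1 := by
            intro hcon; exact hs1 (Subtype.ext hcon)
          have ht1G : (t:G) ≠ 1 := by
            intro hcon; exact ht1 (Subtype.ext hcon)
          apply Subtype.ext
          rcases hu (s:G) hsG with h | h
          · exact absurd h hs1G
          · rcases hu (t:G) htG with h' | h'
            · exact absurd h' ht1G
            · rw [h, h']
      obtain ⟨y, hy⟩ := hcyclicH.exists_generator
      have hHy : H = zpowers (y : G) := by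
        apply le_antisymm
        · intro z hz
          obtain ⟨j, hj⟩ := Subgroup.mem_zpowers_iff.mp (hy ⟨z, hz⟩)
          refine Subgroup.mem_zpowers_iff.mpr ⟨j, ?_⟩
          have := congrArg (Subtype.val) hj
          push_cast at this
          exact this
        · exact Subgroup.zpowers_le.mpr y.2
      have hxH : x ∈ H := Subgroup.subset_closure (by simp)
      have hcH : c ∈ H := Subgroup.subset_closure (by simp)
      have hle : zpowers x ≤ zpowers (y:G) := by
        rw [← hHy]; exact Subgroup.zpowers_le.mpr hxH
      have heq : zpowers x = zpowers (y:G) := by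
        apply Subgroup.eq_of_le_of_card_ge hle
        rw [Nat.card_zpowers, Nat.card_zpowers]
        exact hmax _
      rw [heq, ← hHy]
      exact hcH
    -- a = x ^ 2^(m-1)
    have hax : a = x ^ (2 ^ (m-1) : ℕ) := by
      have h1 : (x ^ (2^(m-1):ℕ)) ^ 2 = 1 := by
        rw [← pow_mul, show (2:ℕ)^(m-1) * 2 = 2^m by rw [← pow_succ]; congr 1; omega,
          ← hm, pow_orderOf_eq_one]
      have h2 : x ^ (2^(m-1):ℕ) ≠ 1 := by
        intro hcon
        have := orderOf_dvd_iff_pow_eq_one.mpr hcon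
        rw [hm] at this
        have h3 := Nat.le_of_dvd (by positivity) this
        have h4 : (2:ℕ)^(m-1) < 2^m := Nat.pow_lt_pow_right one_lt_two (by omega)
        omega
      rcases hu _ h1 with h | h
      · exact absurd h h2
      · exact h.symm
    set A := zpowers x with hA
    have hcardA : Nat.card A = 2^m := by rw [hA, Nat.card_zpowers, hm]
    have hAne : A ≠ ⊤ := by
      intro hcon
      refine hcyc ⟨⟨x, fun z => ?_⟩⟩
      have h1 : z ∈ A := by rw [hcon]; trivial
      exact h1
    have ncond : NormalizerCondition G := by
      haveI := hp2.isNilpotent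
      exact normalizerCondition_of_isNilpotent
    -- local structure on the normalizer
    have hNloc : ∀ w : G, w ∈ (normalizer (A : Set G)) → w ∉ A → (w⁻¹ * x * w = x⁻¹ ∧ w ^ 2 = a) := by
      have base : ∀ w : G, w ∈ (normalizer (A : Set G)) → w ∉ A → w^2 ∈ A →
          (w⁻¹ * x * w = x⁻¹ ∧ w ^ 2 = a) := by
        intro w hwN hwA hw2
        apply localAnalysis a x w m hm2 hm hax hu hCA hwA hw2
        have := (Subgroup.mem_normalizer_iff.mp (inv_mem hwN) x).mp (mem_zpowers x)
        rwa [inv_inv] at this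
      intro w hwN hwA
      have hex : ∃ j, w ^ (2^j) ∈ A := by
        obtain ⟨k, hk⟩ := hord w
        exact ⟨k, by rw [← hk, pow_orderOf_eq_one]; exact one_mem A⟩
      set j := Nat.find hex with hjdef
      have hj : w ^ (2^j) ∈ A := Nat.find_spec hex
      have hjmin : ∀ i, i < j → w ^ (2^i) ∉ A := fun i hi => Nat.find_min hex hi
      have hj1 : 1 ≤ j := by
        by_contra hcon
        have hj0 : j = 0 := by omega
        rw [hj0, pow_zero, pow_one] at hj
        exact hwA hj
      have hj2 : j < 2 := by
        by_contra hcon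
        push_neg at hcon
        set u := w ^ (2^(j-1)) with hudef
        have humem : u ∈ (normalizer (A : Set G)) := pow_mem hwN _
        have huA : u ∉ A := hjmin (j-1) (by omega)
        have hu2 : u^2 ∈ A := by
          rw [hudef, ← pow_mul, show (2:ℕ)^(j-1) * 2 = 2^j by rw [← pow_succ]; congr 1; omega]
          exact hj
        have hbase := base u humem huA hu2
        set v := w ^ (2^(j-2)) with hvdef
        have hvmem : v ∈ (normalizer (A : Set G)) := pow_mem hwN _
        have hvA : v ∉ A := hjmin (j-2) (by omega)
        have hv2 : v^2 = u := by
          rw [hvdef, hudef, ← pow_mul, show (2:ℕ)^(j-2) * 2 = 2^(j-1) by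
            rw [← pow_succ]; congr 1; omega]
        obtain ⟨s, hs⟩ := Subgroup.mem_zpowers_iff.mp
          ((by
            have := (Subgroup.mem_normalizer_iff.mp (inv_mem hvmem) x).mp (mem_zpowers x)
            rwa [inv_inv] at this) : v⁻¹ * x * v ∈ A)
        have hconjv : ∀ jj : ℤ, v⁻¹ * x ^ jj * v = x ^ (s * jj) := by
          intro jj
          have h1 : v⁻¹ * x ^ jj * v = (v⁻¹ * x * v⁻¹⁻¹) ^ jj := by
            rw [conj_zpow]; group
          rw [h1, inv_inv, ← hs, ← zpow_mul]
        have hxinv : x ^ (s * s) = x⁻¹ := by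
          have e1 : v⁻¹ * (v⁻¹ * x * v) * v = x ^ (s * s) := by
            rw [← hs, hconjv s]
          have e2 : v⁻¹ * (v⁻¹ * x * v) * v = u⁻¹ * x * u := by
            rw [← hv2, pow_two]; group
          rw [← e1, e2, hbase.1]
        have hdvd : ((2:ℤ)^m) ∣ s*s + 1 := by
          have h1 : x ^ (s*s+1) = 1 := by
            rw [zpow_add_one, hxinv, inv_mul_cancel]
          have := orderOf_dvd_iff_zpow_eq_one.mpr h1
          rwa [show ((orderOf x : ℤ)) = 2^m by rw [hm]; push_cast; ring] at this
        have h4 : (4:ℤ) ∣ s*s+1 := by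
          refine dvd_trans ?_ hdvd
          have : (4:ℤ) = 2^2 := by norm_num
          rw [this]
          exact pow_dvd_pow 2 hm2
        rcases Int.even_or_odd s with he | ho
        · obtain ⟨r, hr⟩ := he
          obtain ⟨t, ht⟩ := h4
          have : 4*(r*r) + 1 = 4*t := by rw [← ht, hr]; ring
          omega
        · obtain ⟨r, hr⟩ := ho
          obtain ⟨t, ht⟩ := h4
          have : 4*(r*r) + 4*r + 2 = 4*t := by rw [← ht, hr]; ring
          omega
      have hjeq : j = 1 := by omega
      apply base w hwN hwA
      rw [show (2:ℕ) = 2^1 by norm_num, ← hjeq]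
      exact hj
    -- the normalizer of A is everything
    have hNtop : (normalizer (A : Set G)) = ⊤ := by
      have hltAN : A < (normalizer (A : Set G)) := ncond A (lt_top_iff_ne_top.mpr hAne)
      rcases lt_or_ge m 3 with hmlt | hm3
      · -- m = 2 : commutator homomorphism argument
        have hmeq : m = 2 := by omega
        have hsqmem : ∀ y : G, y^2 ∈ zpowers a := by
          intro y
          have h4 : y ^ (4:ℕ) = 1 := by
            apply orderOf_dvd_iff_pow_eq_one.mp
            obtain ⟨k, hk⟩ := hord y
            have h1 : orderOf y ≤ orderOf x := hmax y
            rw [hk, hm, hmeq] at h1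
            have hk2 : k ≤ 2 := by
              by_contra hcon
              push_neg at hcon
              have : (2:ℕ)^3 ≤ 2^k := Nat.pow_le_pow_right (by norm_num) (by omega)
              omega
            rw [hk, show (4:ℕ) = 2^2 by norm_num]
            exact pow_dvd_pow 2 hk2
          have hsq : (y^2)^2 = 1 := by rw [← pow_mul]; exact h4
          rcases hu _ hsq with h | h
          · rw [h]; exact one_mem _
          · rw [h]; exact mem_zpowers a
        have hcenz : ∀ w y : G, w ∈ zpowers a → w * y = y * w := by
          intro w y hw
          obtain ⟨i, hi⟩ := Subgroup.mem_zpowers_iff.mp hw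
          rw [← hi]
          exact ((hcen y).zpow_left i).eq
        have hcommutator : ∀ y z : G, y*z*y⁻¹*z⁻¹ ∈ zpowers a := by
          intro y z
          have ht := hsqmem y
          have hscomm : (y^2)⁻¹ * z = z * (y^2)⁻¹ := by
            have := hcenz (y^2) z ht
            calc (y^2)⁻¹ * z = (y^2)⁻¹ * z * (y^2) * (y^2)⁻¹ := by group
              _ = (y^2)⁻¹ * (y^2) * z * (y^2)⁻¹ := by rw [mul_assoc ((y^2)⁻¹) z (y^2), ← this,
                    ← mul_assoc]
              _ = z * (y^2)⁻¹ := by group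
          have h1 : y*z*y⁻¹*z⁻¹ = y*z*y*((y^2)⁻¹*z)*(z^2)⁻¹ := by group
          have h2 : y*z*y*(z*(y^2)⁻¹)*(z^2)⁻¹ = ((y*z)^2)*((y^2)⁻¹)*((z^2)⁻¹) := by
            rw [pow_two (y*z), pow_two y, pow_two z]; group
          rw [h1, hscomm, h2]
          exact mul_mem (mul_mem (hsqmem (y*z)) (inv_mem ht)) (inv_mem (hsqmem z))
        -- the commutator-with-x homomorphism
        set φ : G →* G := MonoidHom.mk' (fun y => x * y * x⁻¹ * y⁻¹) (by
          intro y z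
          have hD : ∀ w : G, (x*z*x⁻¹*z⁻¹) * w = w * (x*z*x⁻¹*z⁻¹) :=
            fun w => hcenz _ w (hcommutator x z)
          have e1 : (x*y*x⁻¹*y⁻¹)*(x*z*x⁻¹*z⁻¹) = x*y*x⁻¹*(y⁻¹*(x*z*x⁻¹*z⁻¹)) := by group
          have e2 : x*y*x⁻¹*((x*z*x⁻¹*z⁻¹)*y⁻¹) = x*(y*z)*x⁻¹*(y*z)⁻¹ := by group
          rw [e1, ← hD y⁻¹, e2]) with hφ
        have hker : φ.ker = A := by
          apply le_antisymm
          · intro y hy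
            have h1 : x * y * x⁻¹ * y⁻¹ = 1 := hy
            apply hCA
            calc y * x = x * (x⁻¹ * y * x) := by group
              _ = x * (x⁻¹ * (x * y * x⁻¹ * y⁻¹) * y * x) := by rw [h1]; group
              _ = x * y := by group
          · intro y hy
            obtain ⟨i, hi⟩ := Subgroup.mem_zpowers_iff.mp hy
            have : x * y = y * x := by
              rw [← hi]
              exact ((Commute.refl x).zpow_right i).eq
            show x * y * x⁻¹ * y⁻¹ = 1
            rw [this]; group
        have hrange : φ.range ≤ zpowers a := by
          rintro w ⟨y, rfl⟩
          exact hcommutator x y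
        have hcardG : Nat.card G ≤ 8 := by
          have h1 : Nat.card G = Nat.card (G ⧸ φ.ker) * Nat.card φ.ker :=
            Subgroup.card_eq_card_quotient_mul_card_subgroup φ.ker
          have h2 : Nat.card (G ⧸ φ.ker) = Nat.card φ.range :=
            Nat.card_congr (QuotientGroup.quotientKerEquivRange φ).toEquiv
          have h3 : Nat.card φ.range ≤ 2 := by
            have := Subgroup.card_le_of_le hrange
            rwa [Nat.card_zpowers, horda] at this
          have h4 : Nat.card φ.ker = 4 := by
            rw [hker, hcardA, hmeq]; norm_num
          rw [h1, h2, h4]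
          omega
        have hcA4 : Nat.card A = 4 := by rw [hcardA, hmeq]; norm_num
        have hcardN : Nat.card (normalizer (A : Set G)) ≥ 8 := by
          have hd : Nat.card A ∣ Nat.card (normalizer (A : Set G)) :=
            Subgroup.card_dvd_of_le hltAN.le
          have hne : Nat.card A ≠ Nat.card (normalizer (A : Set G)) := by
            intro hcon
            exact hltAN.ne (Subgroup.eq_of_le_of_card_ge hltAN.le (le_of_eq hcon.symm))
          obtain ⟨k, hk⟩ := hd
          rw [hcA4] at hk hne
          have hpos : 0 < Nat.card (normalizer (A : Set G)) := Nat.card_pos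
          omega
        apply Subgroup.eq_top_of_le_card
        have := Subgroup.card_subgroup_dvd_card (normalizer (A : Set G))
        omega
      · -- m ≥ 3
        by_contra hne
        have hlt2 : (normalizer (A : Set G)) < (normalizer (normalizer (A : Set G) : Set G)) :=
          ncond (normalizer (A : Set G)) (lt_top_iff_ne_top.mpr hne)
        obtain ⟨w, hwmem, hwnot⟩ := SetLike.exists_of_lt hlt2
        have hxN : x ∈ (normalizer (A : Set G)) := Subgroup.le_normalizer (mem_zpowers x)
        have hx'N : w⁻¹ * x * w ∈ (normalizer (A : Set G)) := by
          have := (Subgroup.mem_normalizer_iff.mp (inv_mem hwmem) x).mp hxN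
          rwa [inv_inv] at this
        have hordx' : orderOf (w⁻¹ * x * w) = 2^m := by
          have h1 := orderOf_injective (MulAut.conj w⁻¹).toMonoidHom
            (MulEquiv.injective (MulAut.conj w⁻¹)) x
          have h2 : (MulAut.conj w⁻¹).toMonoidHom x = w⁻¹ * x * w := by
            simp [MulAut.conj_apply]
          rw [h2] at h1
          rw [h1, hm]
        by_cases hx'A : w⁻¹ * x * w ∈ A
        · -- w normalizes A, contradiction
          have hzeq : zpowers (w⁻¹ * x * w) = A := by
            apply Subgroup.eq_of_le_of_card_ge (Subgroup.zpowers_le.mpr hx'A)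
            rw [hcardA, Nat.card_zpowers, hordx']
          apply hwnot
          have hwinv : w⁻¹ ∈ (normalizer (A : Set G)) := by
            rw [Subgroup.mem_normalizer_iff]
            intro h
            constructor
            · intro hh
              obtain ⟨i, hi⟩ := Subgroup.mem_zpowers_iff.mp hh
              rw [← hzeq]
              refine Subgroup.mem_zpowers_iff.mpr ⟨i, ?_⟩
              rw [inv_inv, ← hi]
              have : (w⁻¹ * x * w⁻¹⁻¹) ^ i = w⁻¹ * x ^ i * w⁻¹⁻¹ := conj_zpow
              rw [inv_inv] at this
              rw [this]
            · intro hh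
              rw [inv_inv] at hh
              rw [← hzeq] at hh
              obtain ⟨i, hi⟩ := Subgroup.mem_zpowers_iff.mp hh
              have h3 : (w⁻¹ * x * w) ^ i = w⁻¹ * x ^ i * w := by
                have : (w⁻¹ * x * w⁻¹⁻¹) ^ i = w⁻¹ * x ^ i * w⁻¹⁻¹ := conj_zpow
                rwa [inv_inv] at this
              rw [h3] at hi
              have h4 : h = x ^ i := by
                have := hi
                calc h = w * (w⁻¹ * h * w) * w⁻¹ := by group
                  _ = w * (w⁻¹ * x^i * w) * w⁻¹ := by rw [hi]
                  _ = x ^ i := by group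
              rw [h4]
              exact zpow_mem (mem_zpowers x) i
          exact (inv_mem_iff).mp hwinv
        · have hloc := hNloc _ hx'N hx'A
          have h4 : (w⁻¹ * x * w) ^ (4:ℕ) = 1 := by
            rw [show (4:ℕ) = 2*2 by norm_num, pow_mul, hloc.2, ha2]
          have := orderOf_dvd_iff_pow_eq_one.mpr h4
          rw [hordx'] at this
          have h5 := Nat.le_of_dvd (by norm_num) this
          have h6 : (2:ℕ)^3 ≤ 2^m := Nat.pow_le_pow_right (by norm_num) hm3
          omega
    -- now every element outside A inverts x and squares to a
    have hNA : ∀ w : G, w ∉ A → (w⁻¹ * x * w = x⁻¹ ∧ w ^ 2 = a) := by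
      intro w hw
      exact hNloc w (by rw [hNtop]; exact mem_top w) hw
    obtain ⟨g, hg⟩ : ∃ g : G, g ∉ A := by
      by_contra hcon
      push_neg at hcon
      exact hAne ((Subgroup.eq_top_iff' A).mpr hcon)
    -- inverting lemma
    have hinv_conj : ∀ w : G, w ∉ A → w * x * w⁻¹ = x⁻¹ := by
      intro w hw
      have h1 := (hNA w hw).1
      have h6 : w * x⁻¹ * w⁻¹ = x := by
        rw [← h1]; group
      calc w*x*w⁻¹ = (w*x⁻¹*w⁻¹)⁻¹ := by group
        _ = x⁻¹ := by rw [h6]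
    have hcos : ∀ y : G, y ∉ A → g⁻¹ * y ∈ A := by
      intro y hy
      apply hCA
      have hyx : y * x * y⁻¹ = x⁻¹ := hinv_conj y hy
      have hw : (g⁻¹*y)*x*(g⁻¹*y)⁻¹ = x := by
        calc (g⁻¹*y)*x*(g⁻¹*y)⁻¹ = g⁻¹*(y*x*y⁻¹)*g := by group
          _ = g⁻¹*x⁻¹*g := by rw [hyx]
          _ = (g⁻¹*x*g)⁻¹ := by group
          _ = x := by rw [(hNA g hg).1, inv_inv]
      calc (g⁻¹*y)*x = ((g⁻¹*y)*x*(g⁻¹*y)⁻¹)*(g⁻¹*y) := by group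
        _ = x*(g⁻¹*y) := by rw [hw]
    -- construct the isomorphism with the quaternion group
    refine ⟨m+1, by omega, ?_⟩
    rw [show m+1-2 = m-1 by omega]
    set nq : ℕ := 2^(m-1) with hnq
    haveI : NeZero nq := ⟨by positivity⟩
    have hM : orderOf x = 2*nq := by
      rw [hm, hnq, ← pow_succ']; congr 1; omega
    -- integer congruence lemmas
    have hxint : ∀ s t : ℤ, ((s : ZMod (2*nq)) = (t : ZMod (2*nq))) → x ^ s = x ^ t := by
      intro s t h
      rw [zpow_eq_zpow_iff_modEq, hM]
      exact_mod_cast (ZMod.intCast_eq_intCast_iff s t (2*nq)).mp h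
    have hxinj : ∀ s t : ℤ, x ^ s = x ^ t → ((s : ZMod (2*nq)) = (t : ZMod (2*nq))) := by
      intro s t h
      rw [zpow_eq_zpow_iff_modEq, hM] at h
      exact_mod_cast (ZMod.intCast_eq_intCast_iff s t (2*nq)).mpr (by exact_mod_cast h)
    have hval : ∀ i : ZMod (2*nq), (((i.val : ℤ)) : ZMod (2*nq)) = i := by
      intro i
      have := ZMod.natCast_rightInverse (n := 2*nq) i
      exact_mod_cast this
    set ψ : ZMod (2*nq) → G := fun i => x ^ ((i.val : ℤ)) with hψ
    have hconjg : ∀ jj : ℤ, g⁻¹ * x ^ jj * g = x ^ (-jj) := by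
      intro jj
      have h1 : g⁻¹ * x ^ jj * g = (g⁻¹ * x * g⁻¹⁻¹) ^ jj := by
        rw [conj_zpow]; group
      rw [h1, inv_inv, (hNA g hg).1, inv_zpow, ← zpow_neg]
    have hg2 : g^2 = x ^ ((nq : ℤ)) := by
      rw [(hNA g hg).2, hax, hnq]
      rw [show ((2^(m-1) : ℕ) : ℤ) = ((2:ℤ)^(m-1)) by push_cast; ring]
      rw [show ((2:ℤ)^(m-1)) = (((2^(m-1) : ℕ)) : ℤ) by push_cast; ring, zpow_natCast]
    -- the homomorphism
    set f : QuaternionGroup nq → G := fun q =>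
      match q with
      | QuaternionGroup.a i => ψ i
      | QuaternionGroup.xa i => g * ψ i
      with hf
    have hmul : ∀ q r : QuaternionGroup nq, f (q * r) = f q * f r := by
      rintro (i | i) (j | j)
      · show ψ (i + j) = ψ i * ψ j
        rw [hψ]
        simp only []
        rw [← zpow_add]
        apply hxint
        push_cast [hval]
        ring
      · show g * ψ (j - i) = ψ i * (g * ψ j)
        have h1 : ψ i * (g * ψ j) = g * (g⁻¹ * x ^ ((i.val:ℤ)) * g) * x ^ ((j.val:ℤ)) := by
          rw [hψ]; group
        rw [h1, hconjg, mul_assoc, ← zpow_add]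
        congr 1
        apply hxint
        push_cast [hval]
        ring
      · show g * ψ (i + j) = (g * ψ i) * ψ j
        have h1 : (g * ψ i) * ψ j = g * (x ^ ((i.val:ℤ)) * x ^ ((j.val:ℤ))) := by
          rw [hψ]; group
        rw [h1, ← zpow_add]
        congr 1
        apply hxint
        push_cast [hval]
        ring
      · show ψ ((nq : ZMod (2*nq)) + j - i) = (g * ψ i) * (g * ψ j)
        have h1 : (g * ψ i) * (g * ψ j) = g^2 * (g⁻¹ * x ^ ((i.val:ℤ)) * g) * x ^ ((j.val:ℤ)) := by
          rw [hψ, pow_two]; group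
        rw [h1, hconjg, hg2, mul_assoc, ← zpow_add, ← zpow_add]
        apply hxint
        push_cast [hval]
        ring
    set Φ : QuaternionGroup nq →* G := MonoidHom.mk' f hmul with hΦ
    have hinj : Function.Injective f := by
      rintro (i | i) (j | j) h
      · have : x ^ ((i.val:ℤ)) = x ^ ((j.val:ℤ)) := h
        have h2 := hxinj _ _ this
        rw [hval, hval] at h2
        rw [h2]
      · exfalso
        have : x ^ ((i.val:ℤ)) = g * x ^ ((j.val:ℤ)) := h
        apply hg
        have hgeq : g = x ^ ((i.val:ℤ)) * (x ^ ((j.val:ℤ)))⁻¹ := by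
          rw [this]; group
        rw [hgeq]
        exact mul_mem (zpow_mem (mem_zpowers x) _) (inv_mem (zpow_mem (mem_zpowers x) _))
      · exfalso
        have : g * x ^ ((i.val:ℤ)) = x ^ ((j.val:ℤ)) := h
        apply hg
        have hgeq : g = x ^ ((j.val:ℤ)) * (x ^ ((i.val:ℤ)))⁻¹ := by
          rw [← this]; group
        rw [hgeq]
        exact mul_mem (zpow_mem (mem_zpowers x) _) (inv_mem (zpow_mem (mem_zpowers x) _))
      · have : g * x ^ ((i.val:ℤ)) = g * x ^ ((j.val:ℤ)) := h
        have h2 := hxinj _ _ (mul_left_cancel this)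
        rw [hval, hval] at h2
        rw [h2]
    have hsurj : Function.Surjective f := by
      intro y
      by_cases hyA : y ∈ A
      · obtain ⟨jj, hjj⟩ := Subgroup.mem_zpowers_iff.mp hyA
        refine ⟨QuaternionGroup.a ((jj : ZMod (2*nq))), ?_⟩
        show ψ _ = y
        rw [← hjj, hψ]
        apply hxint
        rw [hval]
      · obtain ⟨jj, hjj⟩ := Subgroup.mem_zpowers_iff.mp (hcos y hyA)
        refine ⟨QuaternionGroup.xa ((jj : ZMod (2*nq))), ?_⟩
        show g * ψ _ = y
        have h2 : ψ ((jj : ZMod (2*nq))) = g⁻¹ * y := by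
          rw [← hjj, hψ]
          apply hxint
          rw [hval]
        rw [h2]
        group
    exact ⟨(MulEquiv.ofBijective Φ ⟨hinj, hsurj⟩).symm⟩

/-- if the finite group `G` is not cyclic of order `2^m` (`m ≥ 1`) and not
generalized quaternion of order `2^α` (`α ≥ 3`), then every automorphism of `RP(G)` fixes
the identity element. -/
theorem aut_RP_fixes_one {G : Type*} [Group G] [Fintype G]
    (h1 : ¬ (IsCyclic G ∧ ∃ m : ℕ, 1 ≤ m ∧ Fintype.card G = 2 ^ m))
    (h2 : ¬ ∃ α : ℕ, 3 ≤ α ∧ Nonempty (G ≃* QuaternionGroup (2 ^ (α - 2))))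
    (π : Equiv.Perm G) (hπ : π ∈ RPAut G) :
    π 1 = 1 := by
  classical
  haveI : Fact (Nat.Prime 2) := ⟨Nat.prime_two⟩
  by_contra hne
  set a := π 1 with ha
  have hane : a ≠ 1 := fun h => hne h
  have hπ' : ∀ x y : G, rpAdj G (π x) (π y) ↔ rpAdj G x y := hπ
  have hadj1 : ∀ y : G, y ≠ 1 → rpAdj G 1 y := by
    intro y hy
    have h0 : zpowers (1:G) = ⊥ := by
      rw [Subgroup.zpowers_eq_bot]
    refine Or.inl ?_
    rw [h0]
    exact bot_lt_iff_ne_bot.mpr (fun h => hy (Subgroup.zpowers_eq_bot.mp h))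
  have hdom : ∀ w : G, w ≠ a → rpAdj G a w := by
    intro w hw
    have hy : π.symm w ≠ 1 := by
      intro h
      apply hw
      rw [← Equiv.apply_symm_apply π w, h, ← ha]
    have h3 := (hπ' 1 (π.symm w)).mpr (hadj1 _ hy)
    rwa [← ha, Equiv.apply_symm_apply] at h3
  have ha2 : a ^ 2 = 1 := by
    by_cases h : a⁻¹ = a
    · rw [pow_two]
      nth_rewrite 1 [← h]
      rw [inv_mul_cancel]
    · exfalso
      rcases hdom a⁻¹ h with h1 | h1 <;>
        rw [Subgroup.zpowers_inv] at h1 <;> exact lt_irrefl _ h1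
  have key : ∀ y : G, y ≠ 1 → a ∈ zpowers y := by
    intro y hy
    by_cases hya : y = a
    · rw [hya]; exact mem_zpowers a
    · rcases hdom y hya with h1 | h1
      · exact h1.le (mem_zpowers a)
      · exfalso
        have hy2 : y ∈ zpowers a := h1.le (mem_zpowers y)
        obtain ⟨j, hj⟩ := Subgroup.mem_zpowers_iff.mp hy2
        have horda : orderOf a = 2 := orderOf_eq_prime ha2 hane
        have hmod : a ^ (j % 2) = a ^ j := by
          have h4 := zpow_mod_orderOf a j
          rwa [horda, show ((2:ℕ):ℤ) = (2:ℤ) by norm_cast] at h4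
        have hj2 : j % 2 = 0 ∨ j % 2 = 1 := by omega
        rcases hj2 with h5 | h5
        · apply hy
          rw [← hj, ← hmod, h5, zpow_zero]
        · apply hya
          rw [← hj, ← hmod, h5, zpow_one]
  rcases classify a hane ha2 key with hc | hq
  · exact h1 hc
  · exact h2 hq
end

section
/- Let G be a finite group isomorphic to the cyclic group Z_{2^m} (m ≥ 1) or to the generalized quaternion group Q_{2^α} of order 2^α (α ≥ 3), and let a be the unique element of order 2 in G. Then every automorphism π of the reduced power graph RP(G) satisfies e^π = e or e^π = a, where e is the identity element. -/
open Subgroup Set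

variable (G : Type*) [Group G]

/-- if the finite group `G` is cyclic of order `2^m` (`m ≥ 1`) or generalized
quaternion of order `2^α` (`α ≥ 3`), and `a` is its unique element of order `2`, then every
automorphism `π` of `RP(G)` satisfies `π(e) = e` or `π(e) = a`. -/
theorem aut_RP_one_image {G : Type*} [Group G] [Fintype G]
    (hG : (IsCyclic G ∧ ∃ m : ℕ, 1 ≤ m ∧ Fintype.card G = 2 ^ m) ∨
          (∃ α : ℕ, 3 ≤ α ∧ Nonempty (G ≃* QuaternionGroup (2 ^ (α - 2)))))
    (a : G) (ha : orderOf a = 2) (huniq : ∀ b : G, orderOf b = 2 → b = a)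
    (π : Equiv.Perm G) (hπ : π ∈ RPAut G) :
    π 1 = 1 ∨ π 1 = a := by
  -- the identity is adjacent to every other element
  have hdom1 : ∀ y : G, y ≠ 1 → rpAdj G 1 y := by
    intro y hy
    left
    rw [Subgroup.zpowers_one_eq_bot]
    exact bot_lt_iff_ne_bot.mpr (fun h => hy (Subgroup.zpowers_eq_bot.mp h))
  -- π 1 is adjacent to every other element
  have hdom : ∀ y : G, y ≠ π 1 → rpAdj G (π 1) y := by
    intro y hy
    have h1 : π.symm y ≠ 1 := by
      intro h
      apply hy
      rw [← π.apply_symm_apply y, h]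
    have h2 := (hπ 1 (π.symm y))
    rw [π.apply_symm_apply] at h2
    exact h2.mpr (hdom1 _ h1)
  -- any dominating vertex is 1 or a
  by_contra hcon
  push_neg at hcon
  obtain ⟨h1, h2⟩ := hcon
  have hinv : (π 1)⁻¹ ≠ π 1 := by
    intro h
    have hsq : π 1 * π 1 = 1 := by
      nth_rewrite 1 [← h]; simp
    have hd := orderOf_dvd_of_pow_eq_one (show (π 1) ^ 2 = 1 by rw [pow_two]; exact hsq)
    rcases (Nat.dvd_prime Nat.prime_two).mp hd with h' | h'
    · exact h1 (orderOf_eq_one_iff.mp h')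
    · exact h2 (huniq _ h')
  have hadj := hdom _ hinv
  rw [rpAdj, Subgroup.zpowers_inv] at hadj
  rcases hadj with h | h <;> exact lt_irrefl _ h
end
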